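/- arXiv:2204.06492 — 3 statements merged into one kernel-verified Lean document; each statement's English description precedes it below -/
import Mathlib

section
/- Let S1, S2 be semigroups generated by disjoint finite sets A1, A2 with surjective homomorphisms π_i : A_i^+ → S_i, and let R1 ⊆ A1^+, R2 ⊆ A2^+ be regular combings (i.e. π_i restricted to R_i is surjective onto S_i). Then the language Alt^+(R1, R2) of nonempty alternating words is a regular combing of the semigroup free product S1 ∗ S2, i.e. the canonical map (A1 ∪ A2)^+ → S1 ∗ S2 is surjective when restricted to Alt^+(R1, R2). -/
open Computability

/-- One-step rewriting relation of a rewriting system `R ⊆ A* × A*`. -/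
def RStep {A : Type*} (R : Set (List A × List A)) (x y : List A) : Prop :=
  ∃ p ∈ R, ∃ l r : List A, x = l ++ p.1 ++ r ∧ y = l ++ p.2 ++ r

/-- The congruence generated by a rewriting system: word equality in the
presented semigroup/monoid. -/
def RCong {A : Type*} (R : Set (List A × List A)) : List A → List A → Prop :=
  Relation.EqvGen (RStep R)

/-- The language `Alt(R1, R2)` of alternating words. -/
def Alt {A : Type*} (R1 R2 : Language A) : Language A :=
  (R1 * R2)∗ + (R2 * R1)∗ + (R1 * R2)∗ * R1 + (R2 * R1)∗ * R2

/-- A language over `A1` viewed over the disjoint union alphabet `A1 ⊕ A2`. -/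
def lang1 {A1 A2 : Type*} (L : Language A1) : Language (A1 ⊕ A2) :=
  {w | ∃ x ∈ L, w = x.map Sum.inl}

/-- A language over `A2` viewed over the disjoint union alphabet `A1 ⊕ A2`. -/
def lang2 {A1 A2 : Type*} (L : Language A2) : Language (A1 ⊕ A2) :=
  {w | ∃ x ∈ L, w = x.map Sum.inr}

/-- Relations over `A1` lifted to the disjoint union alphabet `A1 ⊕ A2`. -/
def liftL {A1 A2 : Type*} (R : Set (List A1 × List A1)) :
    Set (List (A1 ⊕ A2) × List (A1 ⊕ A2)) :=
  {p | ∃ q ∈ R, p.1 = q.1.map Sum.inl ∧ p.2 = q.2.map Sum.inl}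

/-- Relations over `A2` lifted to the disjoint union alphabet `A1 ⊕ A2`. -/
def liftR {A1 A2 : Type*} (R : Set (List A2 × List A2)) :
    Set (List (A1 ⊕ A2) × List (A1 ⊕ A2)) :=
  {p | ∃ q ∈ R, p.1 = q.1.map Sum.inr ∧ p.2 = q.2.map Sum.inr}

section Cong

variable {A : Type*} {R : Set (List A × List A)}

lemma RStep.append_left {x y : List A} (h : RStep R x y) (l : List A) :
    RStep R (l ++ x) (l ++ y) := by
  obtain ⟨p, hp, u, v, rfl, rfl⟩ := h
  exact ⟨p, hp, l ++ u, v, by simp⟩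

lemma RStep.append_right {x y : List A} (h : RStep R x y) (r : List A) :
    RStep R (x ++ r) (y ++ r) := by
  obtain ⟨p, hp, u, v, rfl, rfl⟩ := h
  exact ⟨p, hp, u, v ++ r, by simp⟩

lemma RCong.append_left {x y : List A} (h : RCong R x y) (l : List A) :
    RCong R (l ++ x) (l ++ y) := by
  induction h with
  | rel a b hab => exact .rel _ _ (hab.append_left l)
  | refl a => exact .refl _
  | symm a b _ ih => exact ih.symm _ _
  | trans a b c _ _ ih1 ih2 => exact ih1.trans _ _ _ ih2

lemma RCong.append_right {x y : List A} (h : RCong R x y) (r : List A) :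
    RCong R (x ++ r) (y ++ r) := by
  induction h with
  | rel a b hab => exact .rel _ _ (hab.append_right r)
  | refl a => exact .refl _
  | symm a b _ ih => exact ih.symm _ _
  | trans a b c _ _ ih1 ih2 => exact ih1.trans _ _ _ ih2

lemma RCong.append {x y u v : List A} (h1 : RCong R x y) (h2 : RCong R u v) :
    RCong R (x ++ u) (y ++ v) :=
  Relation.EqvGen.trans _ _ _ (h1.append_right u) (h2.append_left y)

end Cong

section Lift

variable {A1 A2 : Type*} {rel1 : Set (List A1 × List A1)} {rel2 : Set (List A2 × List A2)}

lemma rcong_liftL {x y : List A1} (h : RCong rel1 x y) :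
    RCong (liftL rel1 ∪ liftR rel2 : Set (List (A1 ⊕ A2) × List (A1 ⊕ A2)))
      (x.map Sum.inl) (y.map Sum.inl) := by
  induction h with
  | rel a b hab =>
    obtain ⟨p, hp, u, v, rfl, rfl⟩ := hab
    refine .rel _ _ ⟨(p.1.map Sum.inl, p.2.map Sum.inl), Or.inl ⟨p, hp, rfl, rfl⟩,
      u.map Sum.inl, v.map Sum.inl, by simp, by simp⟩
  | refl a => exact .refl _
  | symm a b _ ih => exact ih.symm _ _
  | trans a b c _ _ ih1 ih2 => exact ih1.trans _ _ _ ih2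

lemma rcong_liftR {x y : List A2} (h : RCong rel2 x y) :
    RCong (liftL rel1 ∪ liftR rel2 : Set (List (A1 ⊕ A2) × List (A1 ⊕ A2)))
      (x.map Sum.inr) (y.map Sum.inr) := by
  induction h with
  | rel a b hab =>
    obtain ⟨p, hp, u, v, rfl, rfl⟩ := hab
    refine .rel _ _ ⟨(p.1.map Sum.inr, p.2.map Sum.inr), Or.inr ⟨p, hp, rfl, rfl⟩,
      u.map Sum.inr, v.map Sum.inr, by simp, by simp⟩
  | refl a => exact .refl _
  | symm a b _ ih => exact ih.symm _ _
  | trans a b c _ _ ih1 ih2 => exact ih1.trans _ _ _ ih2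

end Lift

/-- Alternating words: `AltW P Q true v` means `v` is a nonempty alternation of
`P`-blocks and `Q`-blocks starting with a `P`-block. -/
inductive AltW {A : Type*} (P Q : Language A) : Bool → List A → Prop
  | base1 {x} : x ∈ P → AltW P Q true x
  | base2 {x} : x ∈ Q → AltW P Q false x
  | cons1 {x t} : x ∈ P → AltW P Q false t → AltW P Q true (x ++ t)
  | cons2 {x t} : x ∈ Q → AltW P Q true t → AltW P Q false (x ++ t)

section StarLemmas

variable {A : Type*} {P Q : Language A}

lemma kstar_cons {l : Language A} {x y : List A} (hx : x ∈ l) (hy : y ∈ l∗) :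
    x ++ y ∈ l∗ := by
  obtain ⟨S, rfl, hS⟩ := Language.mem_kstar.mp hy
  refine Language.mem_kstar.mpr ⟨x :: S, by simp, ?_⟩
  intro z hz
  rcases List.mem_cons.mp hz with rfl | hz
  · exact hx
  · exact hS z hz

lemma flatten_mem_A {S : List (List A)} (hS : ∀ y ∈ S, y ∈ Q * P) :
    ∀ a ∈ P, a ++ S.flatten ∈ (P * Q)∗ * P := by
  induction S with
  | nil =>
    intro a ha
    exact ⟨[], Language.nil_mem_kstar _, a, ha, by simp⟩
  | cons y S ih =>
    intro a ha
    obtain ⟨b, hb, c, hc, hbc⟩ := Language.mem_mul.mp (hS y (by simp))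
    obtain ⟨u, hu, v, hv, huv⟩ := ih (fun z hz => hS z (by simp [hz])) c hc
    have huv' : u ++ v = c ++ S.flatten := huv
    refine ⟨(a ++ b) ++ u, kstar_cons (Language.append_mem_mul ha hb) hu, v, hv, ?_⟩
    have hbc' : b ++ c = y := hbc
    simp only [List.flatten_cons, ← hbc', List.append_assoc, huv']

lemma mem_star_of_mem_left {a w : List A} (ha : a ∈ P) (hw : w ∈ (Q * P)∗) :
    a ++ w ∈ (P * Q)∗ * P := by
  obtain ⟨S, rfl, hS⟩ := Language.mem_kstar.mp hw
  exact flatten_mem_A hS a ha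

lemma flatten_mem_B {S : List (List A)} (hS : ∀ y ∈ S, y ∈ Q * P) :
    ∀ a ∈ P, ∀ b ∈ Q, a ++ S.flatten ++ b ∈ (P * Q)∗ := by
  induction S with
  | nil =>
    intro a ha b hb
    have : a ++ b ∈ P * Q := Language.append_mem_mul ha hb
    simpa using kstar_cons this (Language.nil_mem_kstar _)
  | cons y S ih =>
    intro a ha b hb
    obtain ⟨c, hc, d, hd, hcd⟩ := Language.mem_mul.mp (hS y (by simp))
    have hcd' : c ++ d = y := hcd
    have h2 := ih (fun z hz => hS z (by simp [hz])) d hd b hb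
    have h3 := kstar_cons (Language.append_mem_mul ha hc) h2
    have heq : (a ++ c) ++ (d ++ S.flatten ++ b) = a ++ (y :: S).flatten ++ b := by
      simp only [List.flatten_cons, ← hcd', List.append_assoc]
    rwa [heq] at h3

lemma mem_star_of_mem_left' {a w : List A} (ha : a ∈ P) (hw : w ∈ (Q * P)∗ * Q) :
    a ++ w ∈ (P * Q)∗ := by
  obtain ⟨u, hu, b, hb, hub⟩ := Language.mem_mul.mp hw
  have hub' : u ++ b = w := hub
  obtain ⟨S, rfl, hS⟩ := Language.mem_kstar.mp hu
  have := flatten_mem_B hS a ha b hb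
  rw [← hub']
  simpa [List.append_assoc] using this

end StarLemmas

section AltWLemmas

variable {A1 A2 : Type*} {R1 : Language A1} {R2 : Language A2}

lemma AltW.ne_nil (hR1ne : ∀ w ∈ R1, w ≠ []) (hR2ne : ∀ w ∈ R2, w ≠ [])
    {b : Bool} {v : List (A1 ⊕ A2)} (h : AltW (lang1 R1) (lang2 R2) b v) : v ≠ [] := by
  induction h with
  | base1 hx => obtain ⟨x1, hx1, rfl⟩ := hx; simpa using hR1ne x1 hx1
  | base2 hx => obtain ⟨x2, hx2, rfl⟩ := hx; simpa using hR2ne x2 hx2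
  | cons1 hx ht ih => obtain ⟨x1, hx1, rfl⟩ := hx; simp [hR1ne x1 hx1, ih]
  | cons2 hx ht ih => obtain ⟨x2, hx2, rfl⟩ := hx; simp [hR2ne x2 hx2, ih]

lemma AltW.mem_alt {b : Bool} {v : List (A1 ⊕ A2)}
    (h : AltW (lang1 R1) (lang2 R2) b v) :
    v ∈ Alt (lang1 R1) (lang2 R2) := by
  set P := (lang1 R1 : Language (A1 ⊕ A2))
  set Q := (lang2 R2 : Language (A1 ⊕ A2))
  have key : v ∈ (cond b ((P * Q)∗ * P + (P * Q)∗) ((Q * P)∗ * Q + (Q * P)∗)) := by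
    clear_value P Q
    induction h with
    | base1 hx =>
      simp only [cond_true, Language.add_def, Set.mem_union]
      exact Or.inl ⟨[], Language.nil_mem_kstar _, _, hx, by simp⟩
    | base2 hx =>
      simp only [cond_false, Language.add_def, Set.mem_union]
      exact Or.inl ⟨[], Language.nil_mem_kstar _, _, hx, by simp⟩
    | cons1 hx ht ih =>
      simp only [cond_false, Language.add_def, Set.mem_union] at ih
      simp only [cond_true, Language.add_def, Set.mem_union]
      rcases ih with ih | ih
      · exact Or.inr (mem_star_of_mem_left' hx ih)
      · exact Or.inl (mem_star_of_mem_left hx ih)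
    | cons2 hx ht ih =>
      simp only [cond_true, Language.add_def, Set.mem_union] at ih
      simp only [cond_false, Language.add_def, Set.mem_union]
      rcases ih with ih | ih
      · exact Or.inr (mem_star_of_mem_left' hx ih)
      · exact Or.inl (mem_star_of_mem_left hx ih)
  unfold Alt
  simp only [Language.add_def, Set.mem_union]
  cases b with
  | true =>
    simp only [cond_true, Language.add_def, Set.mem_union] at key
    rcases key with k | k
    · exact Or.inl (Or.inr k)
    · exact Or.inl (Or.inl (Or.inl k))
  | false =>
    simp only [cond_false, Language.add_def, Set.mem_union] at key
    rcases key with k | k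
    · exact Or.inr k
    · exact Or.inl (Or.inl (Or.inr k))

end AltWLemmas

section Decomp

variable {A1 A2 : Type*}

lemma decomp (w : List (A1 ⊕ A2)) :
    w = [] ∨
    (∃ x1 y, x1 ≠ [] ∧ w = x1.map Sum.inl ++ y ∧ (y = [] ∨ ∃ b t, y = Sum.inr b :: t)) ∨
    (∃ x2 y, x2 ≠ [] ∧ w = x2.map Sum.inr ++ y ∧ (y = [] ∨ ∃ a t, y = Sum.inl a :: t)) := by
  induction w with
  | nil => exact Or.inl rfl
  | cons c w ih =>
    rcases c with a | b
    · refine Or.inr (Or.inl ?_)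
      rcases ih with rfl | ⟨x1, y, hx1, rfl, hy⟩ | ⟨x2, y, hx2, rfl, hy⟩
      · exact ⟨[a], [], by simp, by simp, Or.inl rfl⟩
      · exact ⟨a :: x1, y, by simp, by simp, hy⟩
      · refine ⟨[a], x2.map Sum.inr ++ y, by simp, by simp, Or.inr ?_⟩
        cases x2 with
        | nil => exact absurd rfl hx2
        | cons b x2 => exact ⟨b, x2.map Sum.inr ++ y, by simp⟩
    · refine Or.inr (Or.inr ?_)
      rcases ih with rfl | ⟨x1, y, hx1, rfl, hy⟩ | ⟨x2, y, hx2, rfl, hy⟩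
      · exact ⟨[b], [], by simp, by simp, Or.inl rfl⟩
      · refine ⟨[b], x1.map Sum.inl ++ y, by simp, by simp, Or.inr ?_⟩
        cases x1 with
        | nil => exact absurd rfl hx1
        | cons a x1 => exact ⟨a, x1.map Sum.inl ++ y, by simp⟩
      · exact ⟨b :: x2, y, by simp, by simp, hy⟩

end Decomp

section Main

variable {A1 A2 : Type*}
  (rel1 : Set (List A1 × List A1)) (rel2 : Set (List A2 × List A2))
  (R1 : Language A1) (R2 : Language A2)

lemma comb_main
    (hcomb1 : ∀ w : List A1, w ≠ [] → ∃ r ∈ R1, RCong rel1 r w)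
    (hcomb2 : ∀ w : List A2, w ≠ [] → ∃ r ∈ R2, RCong rel2 r w) :
    ∀ (n : ℕ) (w : List (A1 ⊕ A2)), w.length ≤ n → w ≠ [] →
    ∃ b v, AltW (lang1 R1) (lang2 R2) b v ∧
      RCong (liftL rel1 ∪ liftR rel2) v w ∧
      (b = true ↔ ∃ a t, w = Sum.inl a :: t) := by
  intro n
  induction n with
  | zero =>
    intro w hlen hne
    exact absurd (List.eq_nil_of_length_eq_zero (Nat.le_zero.mp hlen)) hne
  | succ n ih =>
    intro w hlen hne
    rcases decomp w with rfl | ⟨x1, y, hx1, rfl, hy⟩ | ⟨x2, y, hx2, rfl, hy⟩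
    · exact absurd rfl hne
    · obtain ⟨r, hr, hcong⟩ := hcomb1 x1 hx1
      have hhead : ∃ a t, x1.map Sum.inl ++ y = Sum.inl a :: t := by
        cases x1 with
        | nil => exact absurd rfl hx1
        | cons a x1 => exact ⟨a, x1.map Sum.inl ++ y, by simp⟩
      rcases hy with rfl | ⟨b, t, rfl⟩
      · refine ⟨true, r.map Sum.inl, AltW.base1 ⟨r, hr, rfl⟩, ?_, by simpa using hhead⟩
        simpa using (rcong_liftL (rel2 := rel2) hcong)
      · have hylen : (Sum.inr b :: t).length ≤ n := by
          have := hlen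
          simp only [List.length_append, List.length_map] at this
          have hx1' : 1 ≤ x1.length := List.length_pos_iff.mpr hx1
          omega
        obtain ⟨b', v', hv', hcong', hiff'⟩ := ih (Sum.inr b :: t) hylen (by simp)
        have hb' : b' = false := by
          cases b' with
          | false => rfl
          | true => obtain ⟨a, t', het⟩ := hiff'.mp rfl; exact (by simp at het)
        subst hb'
        refine ⟨true, r.map Sum.inl ++ v', AltW.cons1 ⟨r, hr, rfl⟩ hv', ?_, by simpa using hhead⟩
        exact RCong.append (rcong_liftL (rel2 := rel2) hcong) hcong'
    · obtain ⟨r, hr, hcong⟩ := hcomb2 x2 hx2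
      have hhead : ¬ ∃ a t, x2.map Sum.inr ++ y = Sum.inl a :: t := by
        cases x2 with
        | nil => exact absurd rfl hx2
        | cons b x2 => rintro ⟨a, t, het⟩; simp at het
      rcases hy with rfl | ⟨a, t, rfl⟩
      · refine ⟨false, r.map Sum.inr, AltW.base2 ⟨r, hr, rfl⟩, ?_, by simpa using hhead⟩
        simpa using (rcong_liftR (rel1 := rel1) hcong)
      · have hylen : (Sum.inl a :: t).length ≤ n := by
          have := hlen
          simp only [List.length_append, List.length_map] at this
          have hx2' : 1 ≤ x2.length := List.length_pos_iff.mpr hx2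
          omega
        obtain ⟨b', v', hv', hcong', hiff'⟩ := ih (Sum.inl a :: t) hylen (by simp)
        have hb' : b' = true := hiff'.mpr ⟨a, t, rfl⟩
        subst hb'
        refine ⟨false, r.map Sum.inr ++ v', AltW.cons2 ⟨r, hr, rfl⟩ hv', ?_, by simpa using hhead⟩
        exact RCong.append (rcong_liftR (rel1 := rel1) hcong) hcong'

end Main


section RegClosure

variable {α : Type*}

/-- Product DFA with a custom acceptance set. -/
def prodDFA {σ1 σ2 : Type*} (M : DFA α σ1) (N : DFA α σ2) (acc : Set (σ1 × σ2)) :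
    DFA α (σ1 × σ2) where
  step s a := (M.step s.1 a, N.step s.2 a)
  start := (M.start, N.start)
  accept := acc

lemma prodDFA_evalFrom {σ1 σ2 : Type*} (M : DFA α σ1) (N : DFA α σ2) (acc : Set (σ1 × σ2)) :
    ∀ (x : List α) (s : σ1) (t : σ2),
      (prodDFA M N acc).evalFrom (s, t) x = (M.evalFrom s x, N.evalFrom t x) := by
  intro x
  induction x with
  | nil => intro s t; rfl
  | cons a x ih => intro s t; exact ih (M.step s a) (N.step t a)

lemma isRegular_add {L M : Language α} (hL : L.IsRegular) (hM : M.IsRegular) :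
    (L + M).IsRegular := by
  obtain ⟨σ1, i1, M1, rfl⟩ := hL
  obtain ⟨σ2, i2, M2, rfl⟩ := hM
  refine ⟨σ1 × σ2, inferInstance,
    prodDFA M1 M2 {p | p.1 ∈ M1.accept ∨ p.2 ∈ M2.accept}, ?_⟩
  ext x
  rw [DFA.mem_accepts]
  show (prodDFA M1 M2 _).evalFrom (M1.start, M2.start) x ∈ _ ↔ _
  rw [prodDFA_evalFrom]
  simp only [Language.add_def, Set.mem_union]
  rfl

lemma isRegular_sdiff {L M : Language α} (hL : L.IsRegular) (hM : M.IsRegular) :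
    (L \ M : Language α).IsRegular := by
  obtain ⟨σ1, i1, M1, rfl⟩ := hL
  obtain ⟨σ2, i2, M2, rfl⟩ := hM
  refine ⟨σ1 × σ2, inferInstance,
    prodDFA M1 M2 {p | p.1 ∈ M1.accept ∧ p.2 ∉ M2.accept}, ?_⟩
  ext x
  rw [DFA.mem_accepts]
  show (prodDFA M1 M2 _).evalFrom (M1.start, M2.start) x ∈ _ ↔ _
  rw [prodDFA_evalFrom]
  exact Iff.rfl

lemma isRegular_nilLang : ({[]} : Language α).IsRegular := by
  refine ⟨Bool, inferInstance, ⟨fun _ _ => true, false, {false}⟩, ?_⟩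
  have htrue : ∀ x : List α, DFA.evalFrom ⟨fun _ _ => true, false, {false}⟩ true x = true := by
    intro x
    induction x with
    | nil => rfl
    | cons a x ih => exact ih
  ext x
  rw [DFA.mem_accepts]
  cases x with
  | nil => exact ⟨fun _ => rfl, fun _ => rfl⟩
  | cons a x =>
    show DFA.evalFrom _ true x ∈ _ ↔ _
    rw [htrue]
    constructor
    · intro h; exact Bool.noConfusion (h : true = false)
    · intro h; exact absurd (h : _ = []) (List.cons_ne_nil a x)

end RegClosure

section MapDFA

variable {α β : Type*}

/-- A DFA over `β` viewed as a DFA over `α` via an embedding `f : β → α` with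
partial inverse `g`. -/
def mapDFA {σ : Type*} (g : α → Option β) (M : DFA β σ) : DFA α (Option σ) where
  step s a := match s with
    | none => none
    | some s => (g a).map (M.step s)
  start := some M.start
  accept := {p | ∃ s ∈ M.accept, p = some s}

variable {σ : Type*} (f : β → α) (g : α → Option β) (M : DFA β σ)

lemma mapDFA_evalFrom_none : ∀ x : List α, (mapDFA g M).evalFrom none x = none := by
  intro x
  induction x with
  | nil => rfl
  | cons a x ih => exact ih

lemma mapDFA_evalFrom_map (hgf : ∀ b, g (f b) = some b) : ∀ (y : List β) (s : σ),
    (mapDFA g M).evalFrom (some s) (y.map f) = some (M.evalFrom s y) := by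
  intro y
  induction y with
  | nil => intro s; rfl
  | cons b y ih =>
    intro s
    show (mapDFA g M).evalFrom ((mapDFA g M).step (some s) (f b)) (y.map f) = _
    have : (mapDFA g M).step (some s) (f b) = some (M.step s b) := by
      show (g (f b)).map (M.step s) = _
      rw [hgf b]; rfl
    rw [this]
    exact ih (M.step s b)

lemma mapDFA_evalFrom_some (hfg : ∀ a b, g a = some b → a = f b) : ∀ (x : List α) (s t : σ),
    (mapDFA g M).evalFrom (some s) x = some t →
    ∃ y : List β, x = y.map f ∧ t = M.evalFrom s y := by
  intro x
  induction x with
  | nil =>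
    intro s t h
    exact ⟨[], rfl, by simpa using (Option.some_injective _ h).symm⟩
  | cons a x ih =>
    intro s t h
    rw [show (mapDFA g M).evalFrom (some s) (a :: x)
        = (mapDFA g M).evalFrom ((mapDFA g M).step (some s) a) x from rfl] at h
    rcases hga : g a with _ | b
    · rw [show (mapDFA g M).step (some s) a = none by
        show (g a).map (M.step s) = none; rw [hga]; rfl] at h
      rw [mapDFA_evalFrom_none] at h
      exact absurd h (by simp)
    · rw [show (mapDFA g M).step (some s) a = some (M.step s b) by
        show (g a).map (M.step s) = some (M.step s b); rw [hga]; rfl] at h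
      obtain ⟨y, rfl, rfl⟩ := ih (M.step s b) t h
      exact ⟨b :: y, by rw [hfg a b hga]; rfl, rfl⟩

lemma mapDFA_accepts (hgf : ∀ b, g (f b) = some b) (hfg : ∀ a b, g a = some b → a = f b) :
    (mapDFA g M).accepts = {w | ∃ y ∈ M.accepts, w = y.map f} := by
  ext x
  rw [DFA.mem_accepts]
  constructor
  · rintro ⟨s, hs, hx⟩
    obtain ⟨y, rfl, rfl⟩ := mapDFA_evalFrom_some f g M hfg x M.start s hx
    exact ⟨y, hs, rfl⟩
  · rintro ⟨y, hy, rfl⟩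
    exact ⟨M.evalFrom M.start y, hy, mapDFA_evalFrom_map f g M hgf y M.start⟩

end MapDFA

section Lang12

variable {A1 A2 : Type*}

lemma isRegular_lang1 {L : Language A1} (hL : L.IsRegular) :
    (lang1 L : Language (A1 ⊕ A2)).IsRegular := by
  obtain ⟨σ, i, M, rfl⟩ := hL
  refine ⟨Option σ, inferInstance, mapDFA Sum.getLeft? M, ?_⟩
  rw [mapDFA_accepts Sum.inl Sum.getLeft? M (fun b => rfl)
    (fun a b h => by cases a <;> simp_all)]
  rfl

lemma isRegular_lang2 {L : Language A2} (hL : L.IsRegular) :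
    (lang2 L : Language (A1 ⊕ A2)).IsRegular := by
  obtain ⟨σ, i, M, rfl⟩ := hL
  refine ⟨Option σ, inferInstance, mapDFA Sum.getRight? M, ?_⟩
  rw [mapDFA_accepts Sum.inr Sum.getRight? M (fun b => rfl)
    (fun a b h => by cases a <;> simp_all)]
  rfl

end Lang12

section NFAClosure

variable {α : Type*}

lemma append_singleton_eq_append {x y z : List α} {a : α} (h : x ++ [a] = y ++ z)
    (hz : z ≠ []) : ∃ z', z = z' ++ [a] ∧ x = y ++ z' := by
  obtain ⟨z', c, rfl⟩ := z.eq_nil_or_concat.resolve_left hz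
  rw [List.concat_eq_append] at h ⊢
  rw [← List.append_assoc] at h
  obtain ⟨h1, h2⟩ := List.append_inj' h rfl
  obtain rfl : a = c := by injection h2
  exact ⟨z', rfl, h1⟩

/-- NFA for the concatenation of two DFA languages. -/
def concatNFA {σ1 σ2 : Type*} (M : DFA α σ1) (N : DFA α σ2) : NFA α (σ1 ⊕ σ2) where
  step p a := {q | (∃ s, p = Sum.inl s ∧ q = Sum.inl (M.step s a)) ∨
                   (∃ s, p = Sum.inl s ∧ s ∈ M.accept ∧ q = Sum.inr (N.step N.start a)) ∨
                   (∃ t, p = Sum.inr t ∧ q = Sum.inr (N.step t a))}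
  start := {q | q = Sum.inl M.start ∨ (M.start ∈ M.accept ∧ q = Sum.inr N.start)}
  accept := {q | (∃ t ∈ N.accept, q = Sum.inr t) ∨
                 (N.start ∈ N.accept ∧ ∃ s ∈ M.accept, q = Sum.inl s)}

lemma concatNFA_eval {σ1 σ2 : Type*} (M : DFA α σ1) (N : DFA α σ2) :
    ∀ x : List α,
      (∀ s, Sum.inl s ∈ (concatNFA M N).eval x ↔ s = M.eval x) ∧
      (∀ t, Sum.inr t ∈ (concatNFA M N).eval x ↔
        ∃ y z, x = y ++ z ∧ y ∈ M.accepts ∧ t = N.evalFrom N.start z ∧ (y = [] ∨ z ≠ [])) := by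
  intro x
  induction x using List.reverseRecOn with
  | nil =>
    constructor
    · intro s
      show (_ ∨ _) ↔ _
      constructor
      · rintro (h | ⟨_, h⟩)
        · exact Sum.inl.inj h
        · exact absurd h (by simp)
      · rintro rfl; exact Or.inl rfl
    · intro t
      show (_ ∨ _) ↔ _
      constructor
      · rintro (h | ⟨hM, h⟩)
        · exact absurd h (by simp)
        · exact ⟨[], [], rfl, hM, Sum.inr.inj h, Or.inl rfl⟩
      · rintro ⟨y, z, hyz, hy, rfl, _⟩
        obtain ⟨rfl, rfl⟩ := List.append_eq_nil_iff.mp hyz.symm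
        exact Or.inr ⟨hy, rfl⟩
  | append_singleton x a ih =>
    rw [show (concatNFA M N).eval (x ++ [a]) = (concatNFA M N).stepSet ((concatNFA M N).eval x) a
      from NFA.eval_append_singleton _ _ _]
    constructor
    · intro s
      rw [NFA.mem_stepSet]
      constructor
      · rintro ⟨p, hp, hstep⟩
        rcases hstep with ⟨s', rfl, hq⟩ | ⟨s', rfl, _, hq⟩ | ⟨t', rfl, hq⟩
        · obtain rfl : s = M.step s' a := Sum.inl.inj hq
          obtain rfl : s' = M.eval x := (ih.1 s').mp hp
          simp
        · exact absurd hq (by simp)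
        · exact absurd hq (by simp)
      · rintro rfl
        refine ⟨Sum.inl (M.eval x), (ih.1 _).mpr rfl, Or.inl ⟨M.eval x, rfl, ?_⟩⟩
        simp
    · intro t
      rw [NFA.mem_stepSet]
      constructor
      · rintro ⟨p, hp, hstep⟩
        rcases hstep with ⟨s', rfl, hq⟩ | ⟨s', rfl, hacc, hq⟩ | ⟨t', rfl, hq⟩
        · exact absurd hq (by simp)
        · obtain rfl : t = N.step N.start a := Sum.inr.inj hq
          obtain rfl : s' = M.eval x := (ih.1 s').mp hp
          exact ⟨x, [a], rfl, hacc, rfl, Or.inr (by simp)⟩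
        · obtain rfl : t = N.step t' a := Sum.inr.inj hq
          obtain ⟨y, z, rfl, hy, rfl, _⟩ := (ih.2 t').mp hp
          exact ⟨y, z ++ [a], by simp, hy, by simp [DFA.evalFrom_append_singleton],
            Or.inr (by simp)⟩
      · rintro ⟨y, z, hyz, hy, rfl, hcond⟩
        have hz : z ≠ [] := by
          rcases hcond with rfl | hz
          · simp only [List.nil_append] at hyz
            subst hyz
            simp
          · exact hz
        obtain ⟨z', rfl, rfl⟩ := append_singleton_eq_append hyz hz
        rcases eq_or_ne z' [] with rfl | hz'
        · refine ⟨Sum.inl (M.eval (y ++ [])), (ih.1 _).mpr rfl,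
            Or.inr (Or.inl ⟨M.eval (y ++ []), rfl, ?_, ?_⟩)⟩
          · simpa using (show M.eval y ∈ M.accept from hy)
          · simp [DFA.evalFrom]
        · refine ⟨Sum.inr (N.evalFrom N.start z'),
            (ih.2 _).mpr ⟨y, z', rfl, hy, rfl, Or.inr hz'⟩, Or.inr (Or.inr ⟨_, rfl, ?_⟩)⟩
          simp [DFA.evalFrom_append_singleton]

lemma concatNFA_accepts {σ1 σ2 : Type*} (M : DFA α σ1) (N : DFA α σ2) :
    (concatNFA M N).accepts = M.accepts * N.accepts := by
  ext x
  rw [NFA.mem_accepts]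
  constructor
  · rintro ⟨q, hq, hqe⟩
    rcases hq with ⟨t, ht, rfl⟩ | ⟨hN, s, hs, rfl⟩
    · obtain ⟨y, z, rfl, hy, rfl, _⟩ := ((concatNFA_eval M N _).2 t).mp hqe
      exact Language.append_mem_mul hy ht
    · obtain rfl : s = M.eval x := ((concatNFA_eval M N x).1 s).mp hqe
      have : x ∈ M.accepts := hs
      simpa using Language.append_mem_mul this (show ([] : List α) ∈ N.accepts from hN)
  · intro hx
    obtain ⟨y, hy, z, hz, rfl⟩ := Language.mem_mul.mp hx
    rcases eq_or_ne z [] with rfl | hz'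
    · refine ⟨Sum.inl (M.eval (y ++ [])), Or.inr ⟨hz, M.eval (y ++ []), by simpa using (show M.eval y ∈ M.accept from hy), rfl⟩,
        ((concatNFA_eval M N _).1 _).mpr rfl⟩
    · exact ⟨Sum.inr (N.evalFrom N.start z),
        Or.inl ⟨N.evalFrom N.start z, hz, rfl⟩,
        ((concatNFA_eval M N _).2 _).mpr ⟨y, z, rfl, hy, rfl, Or.inr hz'⟩⟩

lemma isRegular_mul {L M : Language α} (hL : L.IsRegular) (hM : M.IsRegular) :
    (L * M).IsRegular := by
  obtain ⟨σ1, i1, M1, rfl⟩ := hL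
  obtain ⟨σ2, i2, M2, rfl⟩ := hM
  exact ⟨Set (σ1 ⊕ σ2), inferInstance, (concatNFA M1 M2).toDFA,
    by rw [NFA.toDFA_correct, concatNFA_accepts]⟩

end NFAClosure

section StarNFA

variable {α : Type*}

lemma kstar_snoc {l : Language α} {y z : List α} (hy : y ∈ l∗) (hz : z ∈ l) :
    y ++ z ∈ l∗ := by
  obtain ⟨S, rfl, hS⟩ := Language.mem_kstar.mp hy
  refine Language.mem_kstar.mpr ⟨S ++ [z], by simp, ?_⟩
  intro w hw
  rcases List.mem_append.mp hw with hw | hw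
  · exact hS w hw
  · obtain rfl : w = z := by simpa using hw
    exact hz

lemma kstar_unsnoc {l : Language α} {y : List α} (hy : y ∈ l∗) (hne : y ≠ []) :
    ∃ u w, y = u ++ w ∧ u ∈ l∗ ∧ w ∈ l ∧ w ≠ [] := by
  obtain ⟨S, rfl, hS⟩ := Language.mem_kstar_iff_exists_nonempty.mp hy
  have hSne : S ≠ [] := by rintro rfl; exact hne rfl
  obtain ⟨S', w, rfl⟩ := S.eq_nil_or_concat.resolve_left hSne
  rw [List.concat_eq_append] at hS ⊢
  refine ⟨S'.flatten, w, by simp, ?_, (hS w (by simp)).1, (hS w (by simp)).2⟩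
  exact Language.join_mem_kstar fun z hz => (hS z (by simp [hz])).1

/-- NFA for the Kleene star of a DFA language. -/
def starNFA {σ : Type*} (M : DFA α σ) : NFA α (Option σ) where
  step p a := {q | (∃ s, p = some s ∧ q = some (M.step s a)) ∨
                   (∃ s, p = some s ∧ s ∈ M.accept ∧ q = some (M.step M.start a)) ∨
                   (p = none ∧ q = some (M.step M.start a))}
  start := {none}
  accept := {q | q = none ∨ ∃ s ∈ M.accept, q = some s}

lemma starNFA_eval {σ : Type*} (M : DFA α σ) :
    ∀ x : List α,
      (none ∈ (starNFA M).eval x ↔ x = []) ∧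
      (∀ t, some t ∈ (starNFA M).eval x ↔
        ∃ y z, x = y ++ z ∧ y ∈ M.accepts∗ ∧ z ≠ [] ∧ t = M.evalFrom M.start z) := by
  intro x
  induction x using List.reverseRecOn with
  | nil =>
    constructor
    · exact ⟨fun _ => rfl, fun _ => rfl⟩
    · intro t
      constructor
      · intro h; exact absurd (h : some t = none) (Option.some_ne_none t)
      · rintro ⟨y, z, hyz, _, hz, _⟩
        obtain ⟨rfl, rfl⟩ := List.append_eq_nil_iff.mp hyz.symm
        exact absurd rfl hz
  | append_singleton x a ih =>
    rw [show (starNFA M).eval (x ++ [a]) = (starNFA M).stepSet ((starNFA M).eval x) a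
      from NFA.eval_append_singleton _ _ _]
    constructor
    · rw [NFA.mem_stepSet]
      constructor
      · rintro ⟨p, hp, hstep⟩
        rcases hstep with ⟨s, rfl, hq⟩ | ⟨s, rfl, _, hq⟩ | ⟨rfl, hq⟩ <;>
          exact absurd hq (by simp)
      · intro h; exact absurd h (by simp)
    · intro t
      rw [NFA.mem_stepSet]
      constructor
      · rintro ⟨p, hp, hstep⟩
        rcases hstep with ⟨s, rfl, hq⟩ | ⟨s, rfl, hacc, hq⟩ | ⟨rfl, hq⟩
        · obtain rfl : t = M.step s a := Option.some.inj hq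
          obtain ⟨y, z, rfl, hy, hz, rfl⟩ := ((ih.2) s).mp hp
          exact ⟨y, z ++ [a], by simp, hy, by simp, by simp [DFA.evalFrom_append_singleton]⟩
        · obtain rfl : t = M.step M.start a := Option.some.inj hq
          obtain ⟨y, z, rfl, hy, hz, rfl⟩ := ((ih.2) s).mp hp
          refine ⟨y ++ z, [a], by simp, kstar_snoc hy hacc, by simp, by simp⟩
        · obtain rfl : t = M.step M.start a := Option.some.inj hq
          obtain rfl : x = [] := ih.1.mp hp
          exact ⟨[], [a], by simp, Language.nil_mem_kstar _, by simp, by simp⟩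
      · rintro ⟨y, z, hyz, hy, hz, rfl⟩
        obtain ⟨z', rfl, rfl⟩ := append_singleton_eq_append hyz hz
        rcases eq_or_ne z' [] with rfl | hz'
        · -- t = M.step M.start a, and y = x (x could be [] or not)
          rcases eq_or_ne y ([] : List α) with rfl | hy'
          · refine ⟨none, ih.1.mpr rfl, Or.inr (Or.inr ⟨rfl, ?_⟩)⟩
            simp [DFA.evalFrom]
          · obtain ⟨u, w, rfl, hu, hw, hwne⟩ := kstar_unsnoc hy hy'
            refine ⟨some (M.evalFrom M.start w),
              (ih.2 _).mpr ⟨u, w, by simp, hu, hwne, rfl⟩,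
              Or.inr (Or.inl ⟨M.evalFrom M.start w, rfl, hw, ?_⟩)⟩
            simp [DFA.evalFrom]
        · refine ⟨some (M.evalFrom M.start z'),
            (ih.2 _).mpr ⟨y, z', rfl, hy, hz', rfl⟩, Or.inl ⟨_, rfl, ?_⟩⟩
          simp [DFA.evalFrom_append_singleton]

lemma starNFA_accepts {σ : Type*} (M : DFA α σ) :
    (starNFA M).accepts = M.accepts∗ := by
  ext x
  rw [NFA.mem_accepts]
  constructor
  · rintro ⟨q, hq, hqe⟩
    rcases hq with rfl | ⟨s, hs, rfl⟩
    · obtain rfl : x = [] := (starNFA_eval M x).1.mp hqe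
      exact Language.nil_mem_kstar _
    · obtain ⟨y, z, rfl, hy, hz, rfl⟩ := ((starNFA_eval M _).2 s).mp hqe
      exact kstar_snoc hy hs
  · intro hx
    rcases eq_or_ne x ([] : List α) with rfl | hx'
    · exact ⟨none, Or.inl rfl, (starNFA_eval M _).1.mpr rfl⟩
    · obtain ⟨u, w, rfl, hu, hw, hwne⟩ := kstar_unsnoc hx hx'
      exact ⟨some (M.evalFrom M.start w), Or.inr ⟨_, hw, rfl⟩,
        ((starNFA_eval M _).2 _).mpr ⟨u, w, rfl, hu, hwne, rfl⟩⟩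

lemma isRegular_kstar {L : Language α} (hL : L.IsRegular) : (L∗).IsRegular := by
  obtain ⟨σ, i, M, rfl⟩ := hL
  exact ⟨Set (Option σ), inferInstance, (starNFA M).toDFA,
    by rw [NFA.toDFA_correct, starNFA_accepts]⟩

end StarNFA


/-- Let `S1 = Sgp⟨A1 | rel1⟩` and `S2 = Sgp⟨A2 | rel2⟩` be semigroups on disjoint
finite alphabets with regular combings `R1 ⊆ A1⁺`, `R2 ⊆ A2⁺` (every nonempty word
is equal in the respective semigroup to some word of the combing). Then the
language `Alt⁺(R1, R2)` of nonempty alternating words is a regular combing of the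
semigroup free product `S1 ∗ S2 = Sgp⟨A1 ∪ A2 | rel1 ∪ rel2⟩`: it is regular, and
every nonempty word over `A1 ∪ A2` is equal in `S1 ∗ S2` to some word of it. -/
theorem altPlus_regular_combing_of_sgp_free_product
    {A1 A2 : Type*} [Fintype A1] [Fintype A2]
    (rel1 : Set (List A1 × List A1)) (rel2 : Set (List A2 × List A2))
    (hrel1 : ∀ p ∈ rel1, p.1 ≠ [] ∧ p.2 ≠ []) (hrel2 : ∀ p ∈ rel2, p.1 ≠ [] ∧ p.2 ≠ [])
    (R1 : Language A1) (R2 : Language A2)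
    (hR1ne : ∀ w ∈ R1, w ≠ []) (hR2ne : ∀ w ∈ R2, w ≠ [])
    (hreg1 : R1.IsRegular) (hreg2 : R2.IsRegular)
    (hcomb1 : ∀ w : List A1, w ≠ [] → ∃ r ∈ R1, RCong rel1 r w)
    (hcomb2 : ∀ w : List A2, w ≠ [] → ∃ r ∈ R2, RCong rel2 r w) :
    (Alt (lang1 R1) (lang2 R2) \ {[]} : Language (A1 ⊕ A2)).IsRegular ∧
    ∀ w : List (A1 ⊕ A2), w ≠ [] →
      ∃ v ∈ (Alt (lang1 R1) (lang2 R2) \ {[]} : Language (A1 ⊕ A2)),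
        RCong (liftL rel1 ∪ liftR rel2) v w := by
  constructor
  · -- regularity
    have hP : (lang1 R1 : Language (A1 ⊕ A2)).IsRegular := isRegular_lang1 hreg1
    have hQ : (lang2 R2 : Language (A1 ⊕ A2)).IsRegular := isRegular_lang2 hreg2
    have hAltReg : (Alt (lang1 R1) (lang2 R2) : Language (A1 ⊕ A2)).IsRegular := by
      unfold Alt
      exact isRegular_add (isRegular_add (isRegular_add
        (isRegular_kstar (isRegular_mul hP hQ))
        (isRegular_kstar (isRegular_mul hQ hP)))
        (isRegular_mul (isRegular_kstar (isRegular_mul hP hQ)) hP))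
        (isRegular_mul (isRegular_kstar (isRegular_mul hQ hP)) hQ)
    exact isRegular_sdiff hAltReg isRegular_nilLang
  · -- combing
    intro w hw
    obtain ⟨b, v, hAlt, hcong, -⟩ :=
      comb_main rel1 rel2 R1 R2 hcomb1 hcomb2 w.length w le_rfl hw
    refine ⟨v, ⟨hAlt.mem_alt, ?_⟩, hcong⟩
    intro hv
    exact (hAlt.ne_nil hR1ne hR2ne) (hv : v = [])
end

section
/- If S is a word-hyperbolic semigroup with respect to a regular combing R ⊆ A^+, and for every element s ∈ S there exists t ∈ S with st = s (every element has a right stabiliser), then S is 1-extendable: the semigroup S^1 obtained by adjoining a new identity is word-hyperbolic with respect to the regular combing R ∪ {ε}. -/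
/-- Evaluation of a word over `A` in `S^1` (the semigroup `S` with a new identity
adjoined), where `f : A → S`. The empty word evaluates to the adjoined identity,
and a nonempty word to the product of its letters in `S`. -/
def evalW {A S : Type*} [Semigroup S] (f : A → S) (w : List A) : WithOne S :=
  (w.map (fun a => (f a : WithOne S))).prod

/-- The multiplication table of a semigroup with respect to a combing `R`, with
equality interpreted in `S^1` (which agrees with equality in `S` for nonempty
words, and lets `ε` represent the adjoined identity). The alphabet is `A ⊕ Bool`,
where `Sum.inr false` plays the role of `#1` and `Sum.inr true` of `#2`. -/
def tableS {A S : Type*} [Semigroup S] (f : A → S) (R : Language A) :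
    Language (A ⊕ Bool) :=
  {w | ∃ u v x : List A, u ∈ R ∧ v ∈ R ∧ x ∈ R ∧
    evalW f (u ++ v) = evalW f x ∧
    w = u.map Sum.inl ++ [Sum.inr false] ++ v.map Sum.inl ++ [Sum.inr true] ++
      (x.map Sum.inl).reverse}






universe uT uN
variable {T : Type uT}

namespace ContextFreeGrammar

/-- A context-free grammar whose nonterminals may live in any universe. -/
structure GCFG (T : Type uT) where
  NT : Type uN
  initial : NT
  rules : Finset (ContextFreeRule T NT)

/-- A Mathlib grammar seen as a `GCFG`. -/
abbrev toG (g : ContextFreeGrammar T) : GCFG T := ⟨g.NT, g.initial, g.rules⟩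

namespace GCFG

def Produces (g : GCFG T) (u v : List (Symbol T g.NT)) : Prop :=
  ∃ r ∈ g.rules, r.Rewrites u v

abbrev Derives (g : GCFG T) : List (Symbol T g.NT) → List (Symbol T g.NT) → Prop :=
  Relation.ReflTransGen g.Produces

def language (g : GCFG T) : Language T :=
  {w | g.Derives [Symbol.nonterminal g.initial] (w.map Symbol.terminal)}

lemma mem_language_iff (g : GCFG T) (w : List T) :
    w ∈ g.language ↔ g.Derives [Symbol.nonterminal g.initial] (w.map Symbol.terminal) :=
  Iff.rfl

@[refl]
lemma Derives.refl {g : GCFG T} (w : List (Symbol T g.NT)) : g.Derives w w :=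
  Relation.ReflTransGen.refl

lemma Produces.single {g : GCFG T} {v w : List (Symbol T g.NT)} (h : g.Produces v w) :
    g.Derives v w :=
  Relation.ReflTransGen.single h

lemma Derives.trans {g : GCFG T} {u v w : List (Symbol T g.NT)} (huv : g.Derives u v)
    (hvw : g.Derives v w) : g.Derives u w :=
  Relation.ReflTransGen.trans huv hvw

lemma Derives.trans_produces {g : GCFG T} {u v w : List (Symbol T g.NT)}
    (huv : g.Derives u v) (hvw : g.Produces v w) : g.Derives u w :=
  Relation.ReflTransGen.tail huv hvw

lemma Produces.append_left {g : GCFG T} {v w : List (Symbol T g.NT)}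
    (hvw : g.Produces v w) (p : List (Symbol T g.NT)) : g.Produces (p ++ v) (p ++ w) :=
  match hvw with | ⟨r, hr, hrvw⟩ => ⟨r, hr, hrvw.append_left p⟩

lemma Produces.append_right {g : GCFG T} {v w : List (Symbol T g.NT)}
    (hvw : g.Produces v w) (p : List (Symbol T g.NT)) : g.Produces (v ++ p) (w ++ p) :=
  match hvw with | ⟨r, hr, hrvw⟩ => ⟨r, hr, hrvw.append_right p⟩

lemma Derives.append_left {g : GCFG T} {v w : List (Symbol T g.NT)}
    (hvw : g.Derives v w) (p : List (Symbol T g.NT)) : g.Derives (p ++ v) (p ++ w) := by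
  induction hvw with
  | refl => exact Derives.refl _
  | tail _ last ih => exact ih.trans_produces (last.append_left p)

lemma Derives.append_right {g : GCFG T} {v w : List (Symbol T g.NT)}
    (hvw : g.Derives v w) (p : List (Symbol T g.NT)) : g.Derives (v ++ p) (w ++ p) := by
  induction hvw with
  | refl => exact Derives.refl _
  | tail _ last ih => exact ih.trans_produces (last.append_right p)

end GCFG

end ContextFreeGrammar

namespace ContextFreeGrammar.GCFG
variable {g : GCFG T}

/-- n-step derivation. -/
def DerivesIn (g : GCFG T) :
    List (Symbol T g.NT) → List (Symbol T g.NT) → ℕ → Prop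
  | u, v, 0 => u = v
  | u, v, n + 1 => ∃ w, g.Produces u w ∧ DerivesIn g w v n

lemma DerivesIn.zero {u v : List (Symbol T g.NT)} (h : g.DerivesIn u v 0) : u = v := h

lemma DerivesIn.tail {u v w : List (Symbol T g.NT)} {n : ℕ}
    (h : g.DerivesIn u v n) (h2 : g.Produces v w) : g.DerivesIn u w (n + 1) := by
  induction n generalizing u with
  | zero => exact ⟨w, h ▸ h2, rfl⟩
  | succ n ih => obtain ⟨t, ht, hd⟩ := h; exact ⟨t, ht, ih hd⟩

lemma derives_iff_derivesIn (u v : List (Symbol T g.NT)) :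
    g.Derives u v ↔ ∃ n, g.DerivesIn u v n := by
  constructor
  · intro h
    induction h with
    | refl => exact ⟨0, rfl⟩
    | tail _ h2 ih => obtain ⟨n, hn⟩ := ih; exact ⟨n + 1, hn.tail h2⟩
  · rintro ⟨n, hn⟩
    induction n generalizing u with
    | zero => exact hn ▸ Derives.refl _
    | succ n ih => obtain ⟨w, hw, hd⟩ := hn; exact (hw.single).trans (ih w hd)

lemma DerivesIn.trans {u v w : List (Symbol T g.NT)} {m n : ℕ}
    (h1 : g.DerivesIn u v m) (h2 : g.DerivesIn v w n) : g.DerivesIn u w (m + n) := by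
  induction m generalizing u with
  | zero => rw [h1.zero]; simpa using h2
  | succ m ih =>
      obtain ⟨t, ht, hd⟩ := h1
      exact Nat.succ_add m n ▸ ⟨t, ht, ih hd⟩

lemma DerivesIn.append_left {v w : List (Symbol T g.NT)} {n : ℕ}
    (h : g.DerivesIn v w n) (p : List (Symbol T g.NT)) :
    g.DerivesIn (p ++ v) (p ++ w) n := by
  induction n generalizing v with
  | zero => show p ++ v = p ++ w; rw [h.zero]
  | succ n ih => obtain ⟨t, ht, hd⟩ := h; exact ⟨p ++ t, ht.append_left p, ih hd⟩

lemma DerivesIn.append_right {v w : List (Symbol T g.NT)} {n : ℕ}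
    (h : g.DerivesIn v w n) (p : List (Symbol T g.NT)) :
    g.DerivesIn (v ++ p) (w ++ p) n := by
  induction n generalizing v with
  | zero => show v ++ p = w ++ p; rw [h.zero]
  | succ n ih => obtain ⟨t, ht, hd⟩ := h; exact ⟨t ++ p, ht.append_right p, ih hd⟩

lemma DerivesIn.append {u₁ u₂ v₁ v₂ : List (Symbol T g.NT)} {n₁ n₂ : ℕ}
    (h1 : g.DerivesIn u₁ v₁ n₁) (h2 : g.DerivesIn u₂ v₂ n₂) :
    g.DerivesIn (u₁ ++ u₂) (v₁ ++ v₂) (n₁ + n₂) :=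
  (h1.append_right u₂).trans (h2.append_left v₁)

lemma no_rewrites_terminal {w : List T} {v : List (Symbol T g.NT)}
    (r : ContextFreeRule T g.NT) (h : r.Rewrites (w.map Symbol.terminal) v) : False := by
  obtain ⟨p, q, hpq, -⟩ := h.exists_parts
  have : Symbol.nonterminal (T := T) r.input ∈ w.map Symbol.terminal := by
    rw [hpq]; simp
  simp only [List.mem_map] at this
  obtain ⟨x, -, hx⟩ := this
  cases hx

lemma derivesIn_terminal {w : List T} {v : List (Symbol T g.NT)} {n : ℕ}
    (h : g.DerivesIn (w.map Symbol.terminal) v n) : v = w.map Symbol.terminal := by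
  cases n with
  | zero => exact h.zero.symm
  | succ n => obtain ⟨t, ⟨r, -, hr⟩, -⟩ := h; exact absurd hr (no_rewrites_terminal r)

lemma rewrites_append_split {r : ContextFreeRule T g.NT} {u₁ u₂ w : List (Symbol T g.NT)}
    (h : r.Rewrites (u₁ ++ u₂) w) :
    (∃ w₁, r.Rewrites u₁ w₁ ∧ w = w₁ ++ u₂) ∨ (∃ w₂, r.Rewrites u₂ w₂ ∧ w = u₁ ++ w₂) := by
  induction u₁ generalizing w with
  | nil => exact Or.inr ⟨w, by simpa using h, by simp⟩
  | cons x u₁ ih =>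
      cases h with
      | head s => exact Or.inl ⟨r.output ++ u₁, ContextFreeRule.Rewrites.head u₁, by simp⟩
      | cons z hrs =>
          rcases ih hrs with ⟨w₁, hw₁, rfl⟩ | ⟨w₂, hw₂, rfl⟩
          · exact Or.inl ⟨x :: w₁, hw₁.cons x, rfl⟩
          · exact Or.inr ⟨w₂, hw₂, rfl⟩

lemma produces_append_split {u₁ u₂ w : List (Symbol T g.NT)}
    (h : g.Produces (u₁ ++ u₂) w) :
    (∃ w₁, g.Produces u₁ w₁ ∧ w = w₁ ++ u₂) ∨ (∃ w₂, g.Produces u₂ w₂ ∧ w = u₁ ++ w₂) := by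
  obtain ⟨r, hr, hrw⟩ := h
  rcases rewrites_append_split hrw with ⟨w₁, hw₁, rfl⟩ | ⟨w₂, hw₂, rfl⟩
  · exact Or.inl ⟨w₁, ⟨r, hr, hw₁⟩, rfl⟩
  · exact Or.inr ⟨w₂, ⟨r, hr, hw₂⟩, rfl⟩

lemma derivesIn_append_split {u₁ u₂ v : List (Symbol T g.NT)} {n : ℕ}
    (h : g.DerivesIn (u₁ ++ u₂) v n) :
    ∃ v₁ v₂ n₁ n₂, v = v₁ ++ v₂ ∧ n₁ + n₂ = n ∧
      g.DerivesIn u₁ v₁ n₁ ∧ g.DerivesIn u₂ v₂ n₂ := by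
  induction n generalizing u₁ u₂ with
  | zero => exact ⟨u₁, u₂, 0, 0, h.zero.symm, rfl, rfl, rfl⟩
  | succ n ih =>
      obtain ⟨t, ht, hd⟩ := h
      rcases produces_append_split ht with ⟨w₁, hw₁, rfl⟩ | ⟨w₂, hw₂, rfl⟩
      · obtain ⟨v₁, v₂, n₁, n₂, rfl, hn, hd₁, hd₂⟩ := ih hd
        exact ⟨v₁, v₂, n₁ + 1, n₂, rfl, by omega, ⟨w₁, hw₁, hd₁⟩, hd₂⟩
      · obtain ⟨v₁, v₂, n₁, n₂, rfl, hn, hd₁, hd₂⟩ := ih hd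
        exact ⟨v₁, v₂, n₁, n₂ + 1, rfl, by omega, hd₁, ⟨w₂, hw₂, hd₂⟩⟩

lemma derivesIn_singleton_nt {X : g.NT} {v : List (Symbol T g.NT)} {n : ℕ}
    (h : g.DerivesIn [Symbol.nonterminal X] v (n + 1)) :
    ∃ r ∈ g.rules, r.input = X ∧ g.DerivesIn r.output v n := by
  obtain ⟨t, ⟨r, hr, hrw⟩, hd⟩ := h
  cases hrw with
  | head s => exact ⟨r, hr, rfl, by simpa using hd⟩
  | cons z hrs => cases hrs

lemma derivesIn_terminal_map_injOn {w v : List T} {n : ℕ}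
    (h : g.DerivesIn (w.map Symbol.terminal) (v.map Symbol.terminal) n) : w = v := by
  have := derivesIn_terminal h
  exact (List.map_injective_iff.2 (fun a b hab => Symbol.terminal.inj hab) this.symm)

end ContextFreeGrammar.GCFG


namespace ContextFreeGrammar

universe uM
variable {T : Type uT}

/-- Map symbols along a map of nonterminals. -/
def mapSymbol {N₁ : Type uN} {N₂ : Type uM} (φ : N₁ → N₂) : Symbol T N₁ → Symbol T N₂
  | .terminal t => .terminal t
  | .nonterminal n => .nonterminal (φ n)

/-- Map a rule along a map of nonterminals. -/
def mapRule {N₁ : Type uN} {N₂ : Type uM} (φ : N₁ → N₂) (r : ContextFreeRule T N₁) :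
    ContextFreeRule T N₂ :=
  ⟨φ r.input, r.output.map (mapSymbol φ)⟩

lemma mapSymbol_map_terminal {N₁ : Type uN} {N₂ : Type uM} (φ : N₁ → N₂) (w : List T) :
    (w.map Symbol.terminal).map (mapSymbol φ) = w.map Symbol.terminal := by
  rw [List.map_map]; rfl

lemma Rewrites.mapNT {N₁ : Type uN} {N₂ : Type uM} {φ : N₁ → N₂} {r : ContextFreeRule T N₁}
    {u v : List (Symbol T N₁)} (h : r.Rewrites u v) :
    (mapRule φ r).Rewrites (u.map (mapSymbol φ)) (v.map (mapSymbol φ)) := by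
  induction h with
  | head s =>
      have : (mapRule φ r).output = r.output.map (mapSymbol φ) := rfl
      have hin : (mapRule φ r).input = φ r.input := rfl
      simpa [mapSymbol, this, hin] using ContextFreeRule.Rewrites.head (r := mapRule φ r)
        (s.map (mapSymbol φ))
  | cons x _ ih => exact ih.cons _

lemma Derives.mapNT (g₁ : GCFG T) (g₂ : GCFG T)
    (φ : g₁.NT → g₂.NT) (hr : ∀ r ∈ g₁.rules, mapRule φ r ∈ g₂.rules)
    {u v : List (Symbol T g₁.NT)} (h : g₁.Derives u v) :
    g₂.Derives (u.map (mapSymbol φ)) (v.map (mapSymbol φ)) := by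
  induction h with
  | refl => rfl
  | tail _ hp ih =>
      obtain ⟨r, hrr, hrw⟩ := hp
      exact ih.trans_produces ⟨mapRule φ r, hr r hrr, Rewrites.mapNT hrw⟩

/-- Any grammar (with nonterminals in any universe) generates a context-free language. -/
theorem isContextFree_of_grammar (g : GCFG T) :
    g.language.IsContextFree := by
  classical
  let ntsOf : ContextFreeRule T g.NT → Finset g.NT := fun r =>
    insert r.input (r.output.filterMap
      (fun s => match s with | .terminal _ => none | .nonterminal n => some n)).toFinset
  let UN : Finset g.NT := insert g.initial (g.rules.biUnion ntsOf)
  have hinit : g.initial ∈ UN := Finset.mem_insert_self _ _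
  have hinput : ∀ r ∈ g.rules, r.input ∈ UN := fun r hr =>
    Finset.mem_insert_of_mem (Finset.mem_biUnion.2 ⟨r, hr, Finset.mem_insert_self _ _⟩)
  have hout : ∀ r ∈ g.rules, ∀ n, (Symbol.nonterminal n) ∈ r.output → n ∈ UN := by
    intro r hr n hn
    refine Finset.mem_insert_of_mem (Finset.mem_biUnion.2 ⟨r, hr,
      Finset.mem_insert_of_mem ?_⟩)
    rw [List.mem_toFinset, List.mem_filterMap]
    exact ⟨Symbol.nonterminal n, hn, rfl⟩
  let k := Fintype.card ↥UN
  let e : ↥UN ≃ Fin k := Fintype.equivFin ↥UN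
  let φ : g.NT → Fin k := fun n => if h : n ∈ UN then e ⟨n, h⟩ else e ⟨g.initial, hinit⟩
  let ψ : Fin k → g.NT := fun i => (e.symm i).1
  have hψφ : ∀ n ∈ UN, ψ (φ n) = n := by
    intro n hn
    simp only [φ, ψ, dif_pos hn, Equiv.symm_apply_apply]
  let g₂ : ContextFreeGrammar T := ⟨Fin k, φ g.initial, g.rules.image (mapRule φ)⟩
  have hfor : ∀ r ∈ g.rules, mapRule φ r ∈ g₂.rules := fun r hr => Finset.mem_image_of_mem _ hr
  have hback : ∀ r' ∈ g₂.rules, mapRule ψ r' ∈ g.rules := by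
    intro r' hr'
    obtain ⟨r, hr, rfl⟩ := Finset.mem_image.1 hr'
    have : mapRule ψ (mapRule φ r) = r := by
      have h1 : ψ (φ r.input) = r.input := hψφ _ (hinput r hr)
      have h2 : (r.output.map (mapSymbol φ)).map (mapSymbol ψ) = r.output := by
        rw [List.map_map]
        have : ∀ s ∈ r.output, (mapSymbol ψ ∘ mapSymbol φ) s = s := by
          intro s hs
          cases s with
          | terminal t => rfl
          | nonterminal n => simp [mapSymbol, Function.comp, hψφ n (hout r hr n hs)]
        rw [List.map_congr_left this]; simp
      exact ContextFreeRule.ext h1 h2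
    rwa [this]
  refine ⟨g₂, Set.ext fun w => ?_⟩
  constructor
  · intro hw
    have hw' : (toG g₂).Derives [Symbol.nonterminal (φ g.initial)] (w.map Symbol.terminal) := hw
    have := Derives.mapNT (toG g₂) g ψ hback hw'
    show g.Derives [Symbol.nonterminal g.initial] (w.map Symbol.terminal)
    simpa [mapSymbol, mapSymbol_map_terminal, hψφ _ hinit, Function.comp_def] using this
  · intro hw
    replace hw : g.Derives [Symbol.nonterminal g.initial] (w.map Symbol.terminal) := hw
    have := Derives.mapNT g (toG g₂) φ hfor hw
    show (toG g₂).Derives [Symbol.nonterminal (φ g.initial)] (w.map Symbol.terminal)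
    simpa [mapSymbol, mapSymbol_map_terminal, Function.comp_def] using this

end ContextFreeGrammar
namespace CFTrans

open ContextFreeGrammar

universe uI uO uQ

/-- A nondeterministic finite transducer (with finitely many transitions and final states,
over a possibly infinite state type). -/
structure NFT (I : Type uI) (O : Type uO) where
  Q : Type uQ
  tr : Q → I → List O → Q → Prop
  htr : {x : Q × I × List O × Q | tr x.1 x.2.1 x.2.2.1 x.2.2.2}.Finite
  q0 : Q
  fin : Q → Prop
  hfin : {q | fin q}.Finite

variable {I : Type uI} {O : Type uO}

namespace NFT

variable {M : NFT.{uI, uO, uQ} I O}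

/-- A run of the transducer reading `w` and emitting `v`. -/
inductive Run (M : NFT.{uI, uO, uQ} I O) : M.Q → List I → List O → M.Q → Prop
  | nil (q : M.Q) : Run M q [] [] q
  | cons {q : M.Q} {c : I} {o : List O} {q' : M.Q} {w : List I} {out : List O} {q'' : M.Q}
      (h : M.tr q c o q') (h2 : Run M q' w out q'') : Run M q (c :: w) (o ++ out) q''

/-- The image of a language under a transducer. -/
def Image (M : NFT.{uI, uO, uQ} I O) (L : Language I) : Language O :=
  {v | ∃ w ∈ L, ∃ qf, M.fin qf ∧ M.Run M.q0 w v qf}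

lemma Run.append {q q' q'' : M.Q} {w₁ w₂ : List I} {v₁ v₂ : List O}
    (h1 : M.Run q w₁ v₁ q') (h2 : M.Run q' w₂ v₂ q'') :
    M.Run q (w₁ ++ w₂) (v₁ ++ v₂) q'' := by
  induction h1 with
  | nil => simpa using h2
  | cons h hr ih => simpa [List.append_assoc] using Run.cons h (ih h2)

/-- The transition set as a set of quadruples. -/
def trSet (M : NFT.{uI, uO, uQ} I O) : Set (M.Q × I × List O × M.Q) :=
  {x | M.tr x.1 x.2.1 x.2.2.1 x.2.2.2}

/-- The (finite) set of relevant states. -/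
def QS (M : NFT.{uI, uO, uQ} I O) : Set M.Q :=
  {M.q0} ∪ {q | M.fin q} ∪ (Prod.fst '' M.trSet) ∪ ((fun x => x.2.2.2) '' M.trSet)

lemma QS_finite (M : NFT.{uI, uO, uQ} I O) : M.QS.Finite := by
  refine (((Set.finite_singleton _).union M.hfin).union (M.htr.image _)).union (M.htr.image _)

lemma q0_mem_QS (M : NFT.{uI, uO, uQ} I O) : M.q0 ∈ M.QS := by
  left; left; left; rfl

lemma fin_mem_QS {q : M.Q} (h : M.fin q) : q ∈ M.QS := by
  left; left; right; exact h

lemma tr_mem_QS {q : M.Q} {c : I} {o : List O} {q' : M.Q} (h : M.tr q c o q') :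
    q ∈ M.QS ∧ q' ∈ M.QS :=
  ⟨Or.inl (Or.inr ⟨(q, c, o, q'), h, rfl⟩), Or.inr ⟨(q, c, o, q'), h, rfl⟩⟩

section Product

variable (M : NFT.{uI, uO, uQ} I O) (g : ContextFreeGrammar I)

/-- Nonterminals of the product grammar. -/
abbrev PNT := Option (M.Q × Symbol I g.NT × M.Q)

/-- A "chain" decorating a sentential form of `g` by transducer states, restricted to the
relevant states. -/
inductive Chain : M.Q → List (Symbol I g.NT) → List (Symbol O (PNT M g)) → M.Q → Prop
  | nil {q : M.Q} (hq : q ∈ M.QS) : Chain q [] [] q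
  | cons {q q' q'' : M.Q} {s : Symbol I g.NT} {l : List (Symbol I g.NT)}
      {c : List (Symbol O (PNT M g))} (hq : q ∈ M.QS) (h : Chain q' l c q'') :
      Chain q (s :: l) (Symbol.nonterminal (some (q, s, q')) :: c) q''

variable {M g}

lemma Chain.left_mem {q q' : M.Q} {l c} (h : Chain M g q l c q') : q ∈ M.QS := by
  cases h with
  | nil hq => exact hq
  | cons hq _ => exact hq

lemma Chain.right_mem {q q' : M.Q} {l c} (h : Chain M g q l c q') : q' ∈ M.QS := by
  induction h with
  | nil hq => exact hq
  | cons _ _ ih => exact ih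

lemma Chain.append {q q' q'' : M.Q} {l₁ l₂ c₁ c₂} (h1 : Chain M g q l₁ c₁ q')
    (h2 : Chain M g q' l₂ c₂ q'') : Chain M g q (l₁ ++ l₂) (c₁ ++ c₂) q'' := by
  induction h1 with
  | nil _ => simpa using h2
  | cons hq _ ih => exact Chain.cons hq (ih h2)

lemma Chain.split {q q'' : M.Q} {l₁ l₂ : List (Symbol I g.NT)} {c} 
    (h : Chain M g q (l₁ ++ l₂) c q'') :
    ∃ q' c₁ c₂, c = c₁ ++ c₂ ∧ Chain M g q l₁ c₁ q' ∧ Chain M g q' l₂ c₂ q'' := by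
  induction l₁ generalizing q c with
  | nil => exact ⟨q, [], c, rfl, Chain.nil h.left_mem, h⟩
  | cons s l₁ ih =>
      cases h with
      | cons hq h' =>
          obtain ⟨qm, c₁, c₂, rfl, hc₁, hc₂⟩ := ih h'
          exact ⟨qm, _ :: c₁, c₂, rfl, Chain.cons hq hc₁, hc₂⟩

lemma Chain.singleton_inv {q q' : M.Q} {s : Symbol I g.NT} {c}
    (h : Chain M g q [s] c q') : c = [Symbol.nonterminal (some (q, s, q'))] := by
  cases h with
  | cons hq h' => cases h'; rfl

lemma chain_finite (l : List (Symbol I g.NT)) :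
    {x : M.Q × List (Symbol O (PNT M g)) × M.Q | Chain M g x.1 l x.2.1 x.2.2}.Finite := by
  induction l with
  | nil =>
      refine Set.Finite.subset ((M.QS_finite).image (fun q => (q, [], q))) ?_
      rintro ⟨q, c, q'⟩ h
      have h2 : Chain M g q [] c q' := h
      cases h2 with
      | nil hq => exact ⟨q, hq, rfl⟩
  | cons s l ih =>
      refine Set.Finite.subset (((M.QS_finite).prod ih).image
        (fun p => (p.1, Symbol.nonterminal (some (p.1, s, p.2.1)) :: p.2.2.1, p.2.2.2))) ?_
      rintro ⟨q, cc, q'⟩ h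
      have h2 : Chain M g q (s :: l) cc q' := h
      cases h2 with
      | @cons _ qm _ _ _ _ hq h' => exact ⟨(q, (qm, _, q')), ⟨hq, h'⟩, rfl⟩

variable (M g)

/-- Rules of the product grammar: start rules. -/
def ruleF : Set (ContextFreeRule O (PNT M g)) :=
  (fun qf => ⟨none, [Symbol.nonterminal (some (M.q0, Symbol.nonterminal g.initial, qf))]⟩) ''
    {q | M.fin q}

/-- Rules of the product grammar: transition rules. -/
def ruleT : Set (ContextFreeRule O (PNT M g)) :=
  (fun x : M.Q × I × List O × M.Q =>
    ⟨some (x.1, Symbol.terminal x.2.1, x.2.2.2), x.2.2.1.map Symbol.terminal⟩) '' M.trSet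

/-- Rules of the product grammar: decorated rules of `g`. -/
def ruleN : Set (ContextFreeRule O (PNT M g)) :=
  {r | ∃ (q q' : M.Q) (rr : ContextFreeRule I g.NT) (c : List (Symbol O (PNT M g))),
    rr ∈ g.rules ∧ Chain M g q rr.output c q' ∧
    r = ⟨some (q, Symbol.nonterminal rr.input, q'), c⟩}

lemma rules_finite : (ruleF M g ∪ ruleT M g ∪ ruleN M g).Finite := by
  refine (((M.hfin.image _).union (M.htr.image _)).union ?_)
  have : ruleN M g ⊆ ⋃ rr ∈ (g.rules : Finset (ContextFreeRule I g.NT)),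
      (fun x : M.Q × List (Symbol O (PNT M g)) × M.Q =>
        (⟨some (x.1, Symbol.nonterminal rr.input, x.2.2), x.2.1⟩ : ContextFreeRule O (PNT M g)))
        '' {x | Chain M g x.1 rr.output x.2.1 x.2.2} := by
    rintro r ⟨q, q', rr, c, hrr, hc, rfl⟩
    exact Set.mem_biUnion hrr ⟨(q, c, q'), hc, rfl⟩
  exact Set.Finite.subset (Set.Finite.biUnion g.rules.finite_toSet
    (fun rr _ => (chain_finite rr.output).image _)) this

/-- The product grammar. -/
noncomputable abbrev prodG : GCFG O :=
  ⟨PNT M g, none, (rules_finite M g).toFinset⟩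

lemma mem_prodG_rules {r : ContextFreeRule O (PNT M g)} :
    r ∈ (prodG M g).rules ↔ r ∈ ruleF M g ∪ ruleT M g ∪ ruleN M g :=
  (rules_finite M g).mem_toFinset

end Product

end NFT

end CFTrans

namespace CFTrans
namespace NFT
open ContextFreeGrammar

universe uI uO uQ
variable {I : Type uI} {O : Type uO}

section Correct

variable (M : NFT.{uI, uO, uQ} I O) (g : ContextFreeGrammar I)

lemma sound : ∀ (n : ℕ) (q : M.Q) (s : Symbol I g.NT) (q' : M.Q) (v : List O),
    (prodG M g).DerivesIn [Symbol.nonterminal (some (q, s, q'))] (v.map Symbol.terminal) n →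
    ∃ w : List I, g.Derives [s] (w.map Symbol.terminal) ∧ M.Run q w v q' := by
  intro n
  induction n using Nat.strong_induction_on with
  | _ n IH =>
  intro q s q' v h
  cases n with
  | zero =>
      exfalso
      have h0 := h.zero
      rcases v with _ | ⟨a, v⟩ <;> simp at h0
  | succ n =>
      obtain ⟨r, hr, hinput, hd⟩ := GCFG.derivesIn_singleton_nt h
      rw [mem_prodG_rules] at hr
      have claim : ∀ (l : List (Symbol I g.NT)) (m : ℕ), m < n + 1 →
          ∀ (qa qb : M.Q) (cc : List (Symbol O (PNT M g))) (v' : List O),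
          Chain M g qa l cc qb →
          (prodG M g).DerivesIn cc (v'.map Symbol.terminal) m →
          ∃ w : List I, g.Derives l (w.map Symbol.terminal) ∧ M.Run qa w v' qb := by
        intro l
        induction l with
        | nil =>
            intro m hm qa qb cc v' hch hdd
            cases hch
            have hv' : v'.map (Symbol.terminal (N := PNT M g)) = [] :=
              GCFG.derivesIn_terminal (w := []) (by simpa using hdd)
            rw [List.map_eq_nil_iff] at hv'
            subst hv'
            exact ⟨[], by simpa using Derives.refl (g := g) [], Run.nil qa⟩
        | cons s' l ihl =>
            intro m hm qa qb cc v' hch hdd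
            cases hch with
            | @cons _ q₁ _ _ _ _ hq hch₂ =>
                have hdd' : (prodG M g).DerivesIn
                    ([Symbol.nonterminal (some (qa, s', q₁))] ++ _) (v'.map Symbol.terminal) m :=
                  hdd
                obtain ⟨v₁, v₂, n₁, n₂, heq, hnn, hd₁, hd₂⟩ := GCFG.derivesIn_append_split hdd'
                obtain ⟨a, b, rfl, rfl, rfl⟩ := List.map_eq_append_iff.mp heq
                obtain ⟨w₁, hder₁, hrun₁⟩ := IH n₁ (by omega) qa s' q₁ a hd₁
                obtain ⟨w₂, hder₂, hrun₂⟩ := ihl n₂ (by omega) q₁ qb _ b hch₂ hd₂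
                refine ⟨w₁ ++ w₂, ?_, hrun₁.append hrun₂⟩
                rw [List.map_append]
                exact (hder₁.append_right l).trans (hder₂.append_left _)
      rcases hr with (hF | hT) | hN
      · obtain ⟨qf, hqf, rfl⟩ := hF
        simp at hinput
      · obtain ⟨⟨q1, c, o, q2⟩, htr, rfl⟩ := hT
        have h3 := Option.some.inj hinput
        have hinj : q1 = q ∧ Symbol.terminal c = s ∧ q2 = q' := by
          simpa [Prod.ext_iff] using h3
        obtain ⟨rfl, hs, rfl⟩ := hinj
        subst hs
        have hvo : v = o := (GCFG.derivesIn_terminal_map_injOn hd).symm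
        subst hvo
        refine ⟨[c], by simpa using Derives.refl (g := g) [Symbol.terminal c], ?_⟩
        simpa using Run.cons htr (Run.nil _)
      · obtain ⟨qa, qb, rr, c, hrr, hchain, rfl⟩ := hN
        have h3 := Option.some.inj hinput
        have hinj : qa = q ∧ Symbol.nonterminal rr.input = s ∧ qb = q' := by
          simpa [Prod.ext_iff] using h3
        obtain ⟨rfl, hs, rfl⟩ := hinj
        subst hs
        obtain ⟨w, hder, hrun⟩ := claim rr.output n (by omega) qa qb c v hchain hd
        exact ⟨w, (Produces.single ⟨rr, hrr, ContextFreeRule.Rewrites.input_output⟩).trans hder, hrun⟩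

lemma complete_base {q q' : M.Q} {w : List I} {v : List O} (hrun : M.Run q w v q') :
    q ∈ M.QS →
    ∃ c, Chain M g q (w.map Symbol.terminal) c q' ∧
      (prodG M g).Derives c (v.map Symbol.terminal) := by
  induction hrun with
  | nil q => exact fun hq => ⟨[], Chain.nil hq, GCFG.Derives.refl _⟩
  | @cons qq c o q₁ w out q'' htr hrun ih =>
      intro hq
      obtain ⟨c₂, hch, hder⟩ := ih (tr_mem_QS htr).2
      refine ⟨Symbol.nonterminal (some (qq, Symbol.terminal c, q₁)) :: c₂,
        Chain.cons hq hch, ?_⟩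
      have hrule : (⟨some (qq, Symbol.terminal c, q₁), o.map Symbol.terminal⟩ :
          ContextFreeRule O (PNT M g)) ∈ (prodG M g).rules :=
        (mem_prodG_rules M g).2 (Or.inl (Or.inr ⟨(qq, c, o, q₁), htr, rfl⟩))
      have hstep : (prodG M g).Produces
          (Symbol.nonterminal (some (qq, Symbol.terminal c, q₁)) :: c₂)
          (o.map Symbol.terminal ++ c₂) :=
        ⟨_, hrule, by simpa using ContextFreeRule.rewrites_of_exists_parts _ [] c₂⟩
      rw [List.map_append]
      exact (GCFG.Produces.single hstep).trans (hder.append_left _)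

lemma complete_main : ∀ (n : ℕ) (sf : List (Symbol I g.NT)) (w : List I),
    g.toG.DerivesIn sf (w.map Symbol.terminal) n → ∀ (q q' : M.Q) (v : List O),
    M.Run q w v q' → q ∈ M.QS →
    ∃ c, Chain M g q sf c q' ∧ (prodG M g).Derives c (v.map Symbol.terminal) := by
  intro n
  induction n with
  | zero =>
      intro sf w h q q' v hrun hq
      rw [h.zero]
      exact complete_base M g hrun hq
  | succ n ih =>
      intro sf w h q q' v hrun hq
      obtain ⟨t, ⟨rr, hrr, hrw⟩, hd⟩ := h
      obtain ⟨p, qp, rfl, rfl⟩ := hrw.exists_parts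
      obtain ⟨ct, hct, hdt⟩ := ih _ _ hd q q' v hrun hq
      have hct' : Chain M g q (p ++ (rr.output ++ qp)) ct q' := by
        simpa [List.append_assoc] using hct
      obtain ⟨qa, c₁, c₂₃, rfl, hc₁, hc₂₃⟩ := hct'.split
      obtain ⟨qb, c₂, c₃, rfl, hc₂, hc₃⟩ := hc₂₃.split
      refine ⟨c₁ ++ ([Symbol.nonterminal (some (qa, Symbol.nonterminal rr.input, qb))] ++ c₃),
        ?_, ?_⟩
      · have := hc₁.append (((Chain.cons (s := Symbol.nonterminal rr.input)
          hc₂.left_mem (Chain.nil hc₂.right_mem))).append hc₃)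
        simpa [List.append_assoc] using this
      · have hrule : (⟨some (qa, Symbol.nonterminal rr.input, qb), c₂⟩ :
            ContextFreeRule O (PNT M g)) ∈ (prodG M g).rules :=
          (mem_prodG_rules M g).2 (Or.inr ⟨qa, qb, rr, c₂, hrr, hc₂, rfl⟩)
        have hstep : (prodG M g).Produces
            (c₁ ++ ([Symbol.nonterminal (some (qa, Symbol.nonterminal rr.input, qb))] ++ c₃))
            (c₁ ++ (c₂ ++ c₃)) := by
          refine ⟨_, hrule, ?_⟩
          have := ContextFreeRule.rewrites_of_exists_parts
            (⟨some (qa, Symbol.nonterminal rr.input, qb), c₂⟩ : ContextFreeRule O (PNT M g))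
            c₁ c₃
          simpa [List.append_assoc] using this
        refine (GCFG.Produces.single hstep).trans ?_
        simpa [List.append_assoc] using hdt

/-- Context-free languages are closed under images of finite transducers. -/
theorem image_isContextFree (M : NFT.{uI, uO, uQ} I O) {L : Language I}
    (hL : L.IsContextFree) : (M.Image L).IsContextFree := by
  obtain ⟨g, rfl⟩ := hL
  have hlang : (prodG M g).language = M.Image g.language := by
    ext v
    constructor
    · intro hv
      rw [GCFG.mem_language_iff, GCFG.derives_iff_derivesIn] at hv
      obtain ⟨n, hn⟩ := hv
      cases n with
      | zero =>
          exfalso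
          have h0 := hn.zero
          rcases v with _ | ⟨a, v⟩ <;> simp at h0
      | succ n =>
          obtain ⟨r, hr, hinput, hd⟩ := GCFG.derivesIn_singleton_nt hn
          rw [mem_prodG_rules] at hr
          rcases hr with (hF | hT) | hN
          · obtain ⟨qf, hqf, rfl⟩ := hF
            obtain ⟨w, hder, hrun⟩ := sound M g n _ _ _ _ hd
            exact ⟨w, hder, qf, hqf, hrun⟩
          · obtain ⟨x, hx, rfl⟩ := hT
            exact absurd (hinput.trans (show (M.prodG g).initial = none from rfl))
              (by simp)
          · obtain ⟨qa, qb, rr, c, hrr, hchain, rfl⟩ := hN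
            exact absurd (hinput.trans (show (M.prodG g).initial = none from rfl))
              (by simp)
    · rintro ⟨w, hw, qf, hqf, hrun⟩
      rw [mem_language_iff] at hw
      rw [GCFG.mem_language_iff]
      have hw : g.toG.Derives [Symbol.nonterminal g.initial] (w.map Symbol.terminal) := hw
      rw [GCFG.derives_iff_derivesIn] at hw
      obtain ⟨n, hn⟩ := hw
      obtain ⟨c, hc, hder⟩ := complete_main M g n _ _ hn M.q0 qf v hrun M.q0_mem_QS
      rw [hc.singleton_inv] at hder
      have hrule : (⟨none, [Symbol.nonterminal (some (M.q0, Symbol.nonterminal g.initial, qf))]⟩ :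
          ContextFreeRule O (PNT M g)) ∈ (prodG M g).rules :=
        (mem_prodG_rules M g).2 (Or.inl (Or.inl ⟨qf, hqf, rfl⟩))
      exact (GCFG.Produces.single ⟨_, hrule, ContextFreeRule.Rewrites.input_output⟩).trans hder
  rw [← hlang]
  exact isContextFree_of_grammar _

end Correct
end NFT
end CFTrans
namespace HypApp

open CFTrans

universe u

/-- States of the master transducer. -/
inductive MSt (A : Type u) : Type u
  | start | iSt | bSt | cCopy | cEnd | dCopy | dEnd : MSt A
  | cGo : A → MSt A
  | cMatch : A → ℕ → MSt A
  | dGo : A → MSt A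
  | dMatch : A → ℕ → MSt A

variable {A : Type u}

/-- Transitions of the master transducer. -/
inductive MTr (wa : A → List A) : MSt A → (A ⊕ Bool) → List (A ⊕ Bool) → MSt A → Prop
  | idFirst (c) : MTr wa .start c [c] .iSt
  | idStep (c) : MTr wa .iSt c [c] .iSt
  | bFirst (c) : MTr wa .start c [Sum.inr false, Sum.inr true] .bSt
  | bStep (c) : MTr wa .bSt c [] .bSt
  | cFirst (c : A) : MTr wa .start (Sum.inl c) [Sum.inr false, Sum.inl c] .cCopy
  | cFirstGo (a : A) : MTr wa .start (Sum.inl a) [Sum.inr false, Sum.inl a] (.cGo a)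
  | cStep (c : A) : MTr wa .cCopy (Sum.inl c) [Sum.inl c] .cCopy
  | cCommit (a : A) : MTr wa .cCopy (Sum.inl a) [Sum.inl a] (.cGo a)
  | cHash (a : A) : MTr wa (.cGo a) (Sum.inr false) [] (.cMatch a 0)
  | cMatchStep (a : A) (k : ℕ) (c : A) (h : (wa a)[k]? = some c) :
      MTr wa (.cMatch a k) (Sum.inl c) [] (.cMatch a (k + 1))
  | cDone (a : A) : MTr wa (.cMatch a (wa a).length) (Sum.inr true) [Sum.inr true] .cEnd
  | cCopyEnd (c : A) : MTr wa .cEnd (Sum.inl c) [Sum.inl c] .cEnd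
  | dFirst (c : A) : MTr wa .start (Sum.inl c) [Sum.inl c] .dCopy
  | dFirstGo (a : A) : MTr wa .start (Sum.inl a) [Sum.inl a] (.dGo a)
  | dStep (c : A) : MTr wa .dCopy (Sum.inl c) [Sum.inl c] .dCopy
  | dCommit (a : A) : MTr wa .dCopy (Sum.inl a) [Sum.inl a] (.dGo a)
  | dHash (a : A) : MTr wa (.dGo a) (Sum.inr false) [Sum.inr false, Sum.inr true] (.dMatch a 0)
  | dMatchStep (a : A) (k : ℕ) (c : A) (h : (wa a)[k]? = some c) :
      MTr wa (.dMatch a k) (Sum.inl c) [] (.dMatch a (k + 1))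
  | dDone (a : A) : MTr wa (.dMatch a (wa a).length) (Sum.inr true) [] .dEnd
  | dCopyEnd (c : A) : MTr wa .dEnd (Sum.inl c) [Sum.inl c] .dEnd

/-- Parameter space for the transitions. -/
abbrev MPar (A : Type u) (wa : A → List A) : Type u :=
  ((A ⊕ Bool) × Fin 4) ⊕ (A × Fin 10) ⊕ (A × Fin 4) ⊕ ((Σ a : A, Fin (wa a).length) × Fin 2)

def mkPar (wa : A → List A) :
    MPar A wa → MSt A × (A ⊕ Bool) × List (A ⊕ Bool) × MSt A
  | .inl (c, 0) => (.start, c, [c], .iSt)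
  | .inl (c, 1) => (.iSt, c, [c], .iSt)
  | .inl (c, 2) => (.start, c, [Sum.inr false, Sum.inr true], .bSt)
  | .inl (c, 3) => (.bSt, c, [], .bSt)
  | .inr (.inl (c, 0)) => (.start, Sum.inl c, [Sum.inr false, Sum.inl c], .cCopy)
  | .inr (.inl (c, 1)) => (.start, Sum.inl c, [Sum.inr false, Sum.inl c], .cGo c)
  | .inr (.inl (c, 2)) => (.cCopy, Sum.inl c, [Sum.inl c], .cCopy)
  | .inr (.inl (c, 3)) => (.cCopy, Sum.inl c, [Sum.inl c], .cGo c)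
  | .inr (.inl (c, 4)) => (.cEnd, Sum.inl c, [Sum.inl c], .cEnd)
  | .inr (.inl (c, 5)) => (.start, Sum.inl c, [Sum.inl c], .dCopy)
  | .inr (.inl (c, 6)) => (.start, Sum.inl c, [Sum.inl c], .dGo c)
  | .inr (.inl (c, 7)) => (.dCopy, Sum.inl c, [Sum.inl c], .dCopy)
  | .inr (.inl (c, 8)) => (.dCopy, Sum.inl c, [Sum.inl c], .dGo c)
  | .inr (.inl (c, 9)) => (.dEnd, Sum.inl c, [Sum.inl c], .dEnd)
  | .inr (.inr (.inl (a, 0))) => (.cGo a, Sum.inr false, [], .cMatch a 0)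
  | .inr (.inr (.inl (a, 1))) =>
      (.cMatch a (wa a).length, Sum.inr true, [Sum.inr true], .cEnd)
  | .inr (.inr (.inl (a, 2))) =>
      (.dGo a, Sum.inr false, [Sum.inr false, Sum.inr true], .dMatch a 0)
  | .inr (.inr (.inl (a, 3))) => (.dMatch a (wa a).length, Sum.inr true, [], .dEnd)
  | .inr (.inr (.inr (⟨a, k⟩, 0))) =>
      (.cMatch a k.1, Sum.inl ((wa a).get k), [], .cMatch a (k.1 + 1))
  | .inr (.inr (.inr (⟨a, k⟩, 1))) =>
      (.dMatch a k.1, Sum.inl ((wa a).get k), [], .dMatch a (k.1 + 1))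

lemma mtr_sub_range (wa : A → List A) :
    {x : MSt A × (A ⊕ Bool) × List (A ⊕ Bool) × MSt A |
      MTr wa x.1 x.2.1 x.2.2.1 x.2.2.2} ⊆ Set.range (mkPar wa) := by
  rintro ⟨q, c, o, q'⟩ h
  have h2 : MTr wa q c o q' := h
  cases h2 with
  | idFirst c => exact ⟨.inl (c, 0), rfl⟩
  | idStep c => exact ⟨.inl (c, 1), rfl⟩
  | bFirst c => exact ⟨.inl (c, 2), rfl⟩
  | bStep c => exact ⟨.inl (c, 3), rfl⟩
  | cFirst c => exact ⟨.inr (.inl (c, 0)), rfl⟩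
  | cFirstGo c => exact ⟨.inr (.inl (c, 1)), rfl⟩
  | cStep c => exact ⟨.inr (.inl (c, 2)), rfl⟩
  | cCommit c => exact ⟨.inr (.inl (c, 3)), rfl⟩
  | cCopyEnd c => exact ⟨.inr (.inl (c, 4)), rfl⟩
  | dFirst c => exact ⟨.inr (.inl (c, 5)), rfl⟩
  | dFirstGo c => exact ⟨.inr (.inl (c, 6)), rfl⟩
  | dStep c => exact ⟨.inr (.inl (c, 7)), rfl⟩
  | dCommit c => exact ⟨.inr (.inl (c, 8)), rfl⟩
  | dCopyEnd c => exact ⟨.inr (.inl (c, 9)), rfl⟩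
  | cHash a => exact ⟨.inr (.inr (.inl (a, 0))), rfl⟩
  | cDone a => exact ⟨.inr (.inr (.inl (a, 1))), rfl⟩
  | dHash a => exact ⟨.inr (.inr (.inl (a, 2))), rfl⟩
  | dDone a => exact ⟨.inr (.inr (.inl (a, 3))), rfl⟩
  | cMatchStep a k c hsome =>
      obtain ⟨hk, hget⟩ := List.getElem?_eq_some_iff.mp hsome
      refine ⟨.inr (.inr (.inr (⟨a, ⟨k, hk⟩⟩, 0))), ?_⟩
      simp [mkPar, hget]
  | dMatchStep a k c hsome =>
      obtain ⟨hk, hget⟩ := List.getElem?_eq_some_iff.mp hsome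
      refine ⟨.inr (.inr (.inr (⟨a, ⟨k, hk⟩⟩, 1))), ?_⟩
      simp [mkPar, hget]

/-- The master transducer. -/
noncomputable abbrev mach (wa : A → List A) [Fintype A] : NFT (A ⊕ Bool) (A ⊕ Bool) where
  Q := MSt A
  tr := MTr wa
  htr := by
    classical
    exact Set.Finite.subset (Set.finite_range (mkPar wa)) (mtr_sub_range wa)
  q0 := .start
  fin := fun q => q = .iSt ∨ q = .bSt ∨ q = .cEnd ∨ q = .dEnd
  hfin := by
    refine Set.Finite.subset
      (Set.toFinite ({.iSt, .bSt, .cEnd, .dEnd} : Set (MSt A))) ?_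
    rintro q (h | h | h | h) <;> simp [h]

end HypApp
namespace HypApp

open CFTrans

universe u
variable {A : Type u} [Fintype A] {wa : A → List A}

lemma fin_iff {q : MSt A} :
    (mach wa).fin q ↔ (q = .iSt ∨ q = .bSt ∨ q = .cEnd ∨ q = .dEnd) := Iff.rfl

lemma run_iSt : ∀ (w v : List (A ⊕ Bool)) (q' : MSt A),
    (mach wa).Run .iSt w v q' → q' = .iSt ∧ v = w := by
  intro w
  induction w with
  | nil => intro v q' h; rcases h; exact ⟨rfl, rfl⟩
  | cons c w ih =>
      intro v q' h
      rcases h with _ | ⟨htr, hrest⟩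
      ·
          cases htr with
          | idStep =>
              obtain ⟨rfl, rfl⟩ := ih _ _ hrest
              exact ⟨rfl, rfl⟩

lemma run_bSt : ∀ (w v : List (A ⊕ Bool)) (q' : MSt A),
    (mach wa).Run .bSt w v q' → q' = .bSt ∧ v = [] := by
  intro w
  induction w with
  | nil => intro v q' h; rcases h; exact ⟨rfl, rfl⟩
  | cons c w ih =>
      intro v q' h
      rcases h with _ | ⟨htr, hrest⟩
      ·
          cases htr with
          | bStep =>
              obtain ⟨rfl, rfl⟩ := ih _ _ hrest
              exact ⟨rfl, rfl⟩

lemma run_cEnd : ∀ (w v : List (A ⊕ Bool)) (q' : MSt A),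
    (mach wa).Run .cEnd w v q' → q' = .cEnd ∧ v = w ∧ ∃ l : List A, w = l.map Sum.inl := by
  intro w
  induction w with
  | nil => intro v q' h; rcases h; exact ⟨rfl, rfl, [], rfl⟩
  | cons c w ih =>
      intro v q' h
      rcases h with _ | ⟨htr, hrest⟩
      ·
          cases htr with
          | cCopyEnd cc =>
              obtain ⟨rfl, rfl, l, rfl⟩ := ih _ _ hrest
              exact ⟨rfl, rfl, cc :: l, rfl⟩

lemma run_dEnd : ∀ (w v : List (A ⊕ Bool)) (q' : MSt A),
    (mach wa).Run .dEnd w v q' → q' = .dEnd ∧ v = w ∧ ∃ l : List A, w = l.map Sum.inl := by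
  intro w
  induction w with
  | nil => intro v q' h; rcases h; exact ⟨rfl, rfl, [], rfl⟩
  | cons c w ih =>
      intro v q' h
      rcases h with _ | ⟨htr, hrest⟩
      ·
          cases htr with
          | dCopyEnd cc =>
              obtain ⟨rfl, rfl, l, rfl⟩ := ih _ _ hrest
              exact ⟨rfl, rfl, cc :: l, rfl⟩

lemma run_cMatch (a : A) : ∀ (w : List (A ⊕ Bool)) (k : ℕ) (v : List (A ⊕ Bool)) (q' : MSt A),
    (mach wa).Run (.cMatch a k) w v q' → (mach wa).fin q' →
    ∃ l : List A, w = ((wa a).drop k).map Sum.inl ++ Sum.inr true :: l.map Sum.inl ∧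
      v = Sum.inr true :: l.map Sum.inl := by
  intro w
  induction w with
  | nil =>
      intro k v q' h hf
      rcases h
      simp [fin_iff] at hf
  | cons c w ih =>
      intro k v q' h hf
      rcases h with _ | ⟨htr, hrest⟩
      ·
          cases htr with
          | cMatchStep _ _ cc hsome =>
              obtain ⟨l, hw, hv⟩ := ih (k + 1) _ _ hrest hf
              obtain ⟨hk, hget⟩ := List.getElem?_eq_some_iff.mp hsome
              refine ⟨l, ?_, by simpa using hv⟩
              rw [hw, List.drop_eq_getElem_cons hk, hget]
              simp
          | cDone =>
              obtain ⟨rfl, rfl, l, rfl⟩ := run_cEnd _ _ _ hrest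
              exact ⟨l, by simp, rfl⟩

lemma run_dMatch (a : A) : ∀ (w : List (A ⊕ Bool)) (k : ℕ) (v : List (A ⊕ Bool)) (q' : MSt A),
    (mach wa).Run (.dMatch a k) w v q' → (mach wa).fin q' →
    ∃ l : List A, w = ((wa a).drop k).map Sum.inl ++ Sum.inr true :: l.map Sum.inl ∧
      v = l.map Sum.inl := by
  intro w
  induction w with
  | nil =>
      intro k v q' h hf
      rcases h
      simp [fin_iff] at hf
  | cons c w ih =>
      intro k v q' h hf
      rcases h with _ | ⟨htr, hrest⟩
      ·
          cases htr with
          | dMatchStep _ _ cc hsome =>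
              obtain ⟨l, hw, hv⟩ := ih (k + 1) _ _ hrest hf
              obtain ⟨hk, hget⟩ := List.getElem?_eq_some_iff.mp hsome
              refine ⟨l, ?_, by simpa using hv⟩
              rw [hw, List.drop_eq_getElem_cons hk, hget]
              simp
          | dDone =>
              obtain ⟨rfl, rfl, l, rfl⟩ := run_dEnd _ _ _ hrest
              exact ⟨l, by simp, by simp⟩

lemma run_cGo (a : A) (w v : List (A ⊕ Bool)) (q' : MSt A)
    (h : (mach wa).Run (.cGo a) w v q') (hf : (mach wa).fin q') :
    ∃ l : List A,
      w = Sum.inr false :: ((wa a).map Sum.inl ++ Sum.inr true :: l.map Sum.inl) ∧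
      v = Sum.inr true :: l.map Sum.inl := by
  rcases h with _ | ⟨htr, hrest⟩
  · simp [fin_iff] at hf
  ·
      cases htr with
      | cHash =>
          obtain ⟨l, hw, hv⟩ := run_cMatch a _ 0 _ _ hrest hf
          exact ⟨l, by simpa using hw ▸ rfl, by simpa using hv⟩

lemma run_dGo (a : A) (w v : List (A ⊕ Bool)) (q' : MSt A)
    (h : (mach wa).Run (.dGo a) w v q') (hf : (mach wa).fin q') :
    ∃ l : List A,
      w = Sum.inr false :: ((wa a).map Sum.inl ++ Sum.inr true :: l.map Sum.inl) ∧
      v = Sum.inr false :: Sum.inr true :: l.map Sum.inl := by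
  rcases h with _ | ⟨htr, hrest⟩
  · simp [fin_iff] at hf
  ·
      cases htr with
      | dHash =>
          obtain ⟨l, hw, hv⟩ := run_dMatch a _ 0 _ _ hrest hf
          exact ⟨l, by simpa using hw ▸ rfl, by simp [hv]⟩

lemma run_cCopy : ∀ (w v : List (A ⊕ Bool)) (q' : MSt A),
    (mach wa).Run .cCopy w v q' → (mach wa).fin q' →
    ∃ (γ : List A) (aa : A) (l : List A),
      w = γ.map Sum.inl ++ Sum.inl aa ::
        Sum.inr false :: ((wa aa).map Sum.inl ++ Sum.inr true :: l.map Sum.inl) ∧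
      v = γ.map Sum.inl ++ Sum.inl aa :: Sum.inr true :: l.map Sum.inl := by
  intro w
  induction w with
  | nil => intro v q' h hf; rcases h; simp [fin_iff] at hf
  | cons c w ih =>
      intro v q' h hf
      rcases h with _ | ⟨htr, hrest⟩
      ·
          cases htr with
          | cStep cc =>
              obtain ⟨γ, aa, l, rfl, rfl⟩ := ih _ _ hrest hf
              exact ⟨cc :: γ, aa, l, by simp, by simp⟩
          | cCommit aa =>
              obtain ⟨l, rfl, rfl⟩ := run_cGo aa _ _ _ hrest hf
              exact ⟨[], aa, l, by simp, by simp⟩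

lemma run_dCopy : ∀ (w v : List (A ⊕ Bool)) (q' : MSt A),
    (mach wa).Run .dCopy w v q' → (mach wa).fin q' →
    ∃ (γ : List A) (aa : A) (l : List A),
      w = γ.map Sum.inl ++ Sum.inl aa ::
        Sum.inr false :: ((wa aa).map Sum.inl ++ Sum.inr true :: l.map Sum.inl) ∧
      v = γ.map Sum.inl ++ Sum.inl aa :: Sum.inr false :: Sum.inr true :: l.map Sum.inl := by
  intro w
  induction w with
  | nil => intro v q' h hf; rcases h; simp [fin_iff] at hf
  | cons c w ih =>
      intro v q' h hf
      rcases h with _ | ⟨htr, hrest⟩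
      ·
          cases htr with
          | dStep cc =>
              obtain ⟨γ, aa, l, rfl, rfl⟩ := ih _ _ hrest hf
              exact ⟨cc :: γ, aa, l, by simp, by simp⟩
          | dCommit aa =>
              obtain ⟨l, rfl, rfl⟩ := run_dGo aa _ _ _ hrest hf
              exact ⟨[], aa, l, by simp, by simp⟩

/-! Run construction lemmas. -/

lemma build_iSt : ∀ w : List (A ⊕ Bool), (mach wa).Run .iSt w w .iSt := by
  intro w
  induction w with
  | nil => exact NFT.Run.nil _
  | cons c w ih => exact NFT.Run.cons (MTr.idStep c) ih

lemma build_bSt : ∀ w : List (A ⊕ Bool), (mach wa).Run .bSt w [] .bSt := by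
  intro w
  induction w with
  | nil => exact NFT.Run.nil _
  | cons c w ih => exact NFT.Run.cons (MTr.bStep c) ih

lemma build_cEnd : ∀ l : List A,
    (mach wa).Run .cEnd (l.map Sum.inl) (l.map Sum.inl) .cEnd := by
  intro l
  induction l with
  | nil => exact NFT.Run.nil _
  | cons c l ih => exact NFT.Run.cons (MTr.cCopyEnd c) ih

lemma build_dEnd : ∀ l : List A,
    (mach wa).Run .dEnd (l.map Sum.inl) (l.map Sum.inl) .dEnd := by
  intro l
  induction l with
  | nil => exact NFT.Run.nil _
  | cons c l ih => exact NFT.Run.cons (MTr.dCopyEnd c) ih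

lemma build_cMatch (a : A) : ∀ (s p : List A), wa a = p ++ s →
    (mach wa).Run (.cMatch a p.length) (s.map Sum.inl) [] (.cMatch a (wa a).length) := by
  intro s
  induction s with
  | nil =>
      intro p hp
      have hlen : (wa a).length = p.length := by rw [hp]; simp
      rw [hlen]
      exact NFT.Run.nil _
  | cons c s ih =>
      intro p hp
      have hsome : (wa a)[p.length]? = some c := by
        rw [hp]
        rw [List.getElem?_append_right (le_refl p.length)]
        simp
      have step : MTr wa (.cMatch a p.length) (Sum.inl c) [] (.cMatch a (p.length + 1)) :=
        MTr.cMatchStep a p.length c hsome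
      have ihp := ih (p ++ [c]) (by simpa using hp)
      rw [List.length_append, List.length_singleton] at ihp
      exact NFT.Run.cons step ihp

lemma build_dMatch (a : A) : ∀ (s p : List A), wa a = p ++ s →
    (mach wa).Run (.dMatch a p.length) (s.map Sum.inl) [] (.dMatch a (wa a).length) := by
  intro s
  induction s with
  | nil =>
      intro p hp
      have hlen : (wa a).length = p.length := by rw [hp]; simp
      rw [hlen]
      exact NFT.Run.nil _
  | cons c s ih =>
      intro p hp
      have hsome : (wa a)[p.length]? = some c := by
        rw [hp]
        rw [List.getElem?_append_right (le_refl p.length)]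
        simp
      have step : MTr wa (.dMatch a p.length) (Sum.inl c) [] (.dMatch a (p.length + 1)) :=
        MTr.dMatchStep a p.length c hsome
      have ihp := ih (p ++ [c]) (by simpa using hp)
      rw [List.length_append, List.length_singleton] at ihp
      exact NFT.Run.cons step ihp

lemma build_cCopy : ∀ (γ : List A) (aa : A),
    (mach wa).Run .cCopy ((γ ++ [aa]).map Sum.inl) ((γ ++ [aa]).map Sum.inl) (.cGo aa) := by
  intro γ
  induction γ with
  | nil =>
      intro aa
      simpa using NFT.Run.cons (MTr.cCommit (wa := wa) aa) (NFT.Run.nil _)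
  | cons c γ ih =>
      intro aa
      simpa using NFT.Run.cons (MTr.cStep (wa := wa) c) (ih aa)

lemma build_dCopy : ∀ (γ : List A) (aa : A),
    (mach wa).Run .dCopy ((γ ++ [aa]).map Sum.inl) ((γ ++ [aa]).map Sum.inl) (.dGo aa) := by
  intro γ
  induction γ with
  | nil =>
      intro aa
      simpa using NFT.Run.cons (MTr.dCommit (wa := wa) aa) (NFT.Run.nil _)
  | cons c γ ih =>
      intro aa
      simpa using NFT.Run.cons (MTr.dStep (wa := wa) c) (ih aa)

lemma build_start_cGo : ∀ (γ : List A) (aa : A),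
    (mach wa).Run .start ((γ ++ [aa]).map Sum.inl)
      (Sum.inr false :: (γ ++ [aa]).map Sum.inl) (.cGo aa) := by
  intro γ aa
  cases γ with
  | nil => simpa using NFT.Run.cons (MTr.cFirstGo (wa := wa) aa) (NFT.Run.nil _)
  | cons c γ => simpa using NFT.Run.cons (MTr.cFirst (wa := wa) c) (build_cCopy γ aa)

lemma build_start_dGo : ∀ (γ : List A) (aa : A),
    (mach wa).Run .start ((γ ++ [aa]).map Sum.inl)
      ((γ ++ [aa]).map Sum.inl) (.dGo aa) := by
  intro γ aa
  cases γ with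
  | nil => simpa using NFT.Run.cons (MTr.dFirstGo (wa := wa) aa) (NFT.Run.nil _)
  | cons c γ => simpa using NFT.Run.cons (MTr.dFirst (wa := wa) c) (build_dCopy γ aa)

end HypApp
namespace HypApp

universe u v
variable {A : Type u} {S : Type v} [Semigroup S]

lemma evalW_append (f : A → S) (u w : List A) :
    evalW f (u ++ w) = evalW f u * evalW f w := by
  simp [evalW]

lemma evalW_nil (f : A → S) : evalW f [] = 1 := rfl

lemma evalW_cons (f : A → S) (a : A) (w : List A) :
    evalW f (a :: w) = (↑(f a) : WithOne S) * evalW f w := by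
  simp [evalW]

lemma evalW_exists_coe (f : A → S) : ∀ w : List A, w ≠ [] → ∃ s : S, evalW f w = ↑s := by
  intro w
  induction w with
  | nil => intro h; exact absurd rfl h
  | cons a w ih =>
      intro _
      cases w with
      | nil => exact ⟨f a, by simp [evalW]⟩
      | cons b w' =>
          obtain ⟨s, hs⟩ := ih (by simp)
          exact ⟨f a * s, by rw [evalW_cons, hs, ← WithOne.coe_mul]⟩

lemma evalW_ne_one (f : A → S) (w : List A) (h : w ≠ []) : evalW f w ≠ 1 := by
  obtain ⟨s, hs⟩ := evalW_exists_coe f w h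
  rw [hs]
  exact WithOne.coe_ne_one

lemma parse_marker : ∀ (u₁ : List A) {u₂ : List A} {b₁ b₂ : Bool}
    {r₁ r₂ : List (A ⊕ Bool)},
    u₁.map Sum.inl ++ Sum.inr b₁ :: r₁ = u₂.map Sum.inl ++ Sum.inr b₂ :: r₂ →
    u₁ = u₂ ∧ b₁ = b₂ ∧ r₁ = r₂ := by
  intro u₁
  induction u₁ with
  | nil =>
      intro u₂ b₁ b₂ r₁ r₂ h
      cases u₂ with
      | nil => simpa using h
      | cons d u₂ => simp at h
  | cons c u₁ ih =>
      intro u₂ b₁ b₂ r₁ r₂ h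
      cases u₂ with
      | nil => simp at h
      | cons d u₂ =>
          simp only [List.map_cons, List.cons_append, List.cons.injEq] at h
          obtain ⟨h1, h2⟩ := h
          obtain ⟨rfl, rfl, rfl⟩ := ih h2
          obtain rfl : c = d := Sum.inl.inj h1
          exact ⟨rfl, rfl, rfl⟩

lemma regular_add_eps (R : Language A) (h : R.IsRegular) :
    (R + ({[]} : Language A)).IsRegular := by
  obtain ⟨σ, fσ, M, hM⟩ := h
  refine ⟨σ × Bool, @instFintypeProd σ Bool fσ _, ⟨fun p c => (M.step p.1 c, false),
    (M.start, true), {p | p.1 ∈ M.accept ∨ p.2 = true}⟩, ?_⟩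
  have key : ∀ (w : List A) (c : A) (s : σ) (b : Bool),
      DFA.evalFrom ⟨fun p c => (M.step p.1 c, false), (M.start, true),
        {p | p.1 ∈ M.accept ∨ p.2 = true}⟩ (s, b) (c :: w) = (M.evalFrom s (c :: w), false) := by
    intro w
    induction w with
    | nil => intro c s b; rfl
    | cons d w ih =>
        intro c s b
        show DFA.evalFrom _ (M.step s c, false) (d :: w) = _
        rw [ih]
        rfl
  ext w
  rw [DFA.mem_accepts]
  cases w with
  | nil =>
      simp only [DFA.eval_nil]
      constructor
      · intro _; exact (Language.mem_add _ _ _).2 (Or.inr rfl)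
      · intro _; right; rfl
  | cons c w =>
      show (DFA.evalFrom _ (M.start, true) (c :: w)) ∈ _ ↔ _
      rw [key]
      constructor
      · rintro (h | h)
        · exact (Language.mem_add _ _ _).2 (Or.inl (by rw [← hM]; exact h))
        · exact Bool.noConfusion h
      · intro h
        rcases (Language.mem_add _ _ _).1 h with h | h
        · left; rw [← hM] at h; exact h
        · exact (List.cons_ne_nil _ _ h).elim

end HypApp

namespace HypApp

open CFTrans

/-- A singleton language is context-free. -/
lemma singleton_isContextFree {T : Type*} (x : List T) :
    ({x} : Language T).IsContextFree := by
  classical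
  refine ⟨⟨PUnit, ⟨⟩, {⟨⟨⟩, x.map Symbol.terminal⟩}⟩, ?_⟩
  ext w
  rw [ContextFreeGrammar.mem_language_iff]
  constructor
  · intro h
    obtain ⟨n, hn⟩ := (ContextFreeGrammar.GCFG.derives_iff_derivesIn
      (g := ContextFreeGrammar.toG ⟨PUnit, ⟨⟩, {(⟨⟨⟩, x.map Symbol.terminal⟩ : ContextFreeRule T PUnit.{1})}⟩) _ _).1 h
    cases n with
    | zero =>
        exfalso
        have h0 := hn.zero
        rcases w with _ | ⟨a, w⟩ <;> simp at h0
    | succ n =>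
        obtain ⟨r, hr, hinput, hd⟩ := ContextFreeGrammar.GCFG.derivesIn_singleton_nt hn
        have hr := Finset.mem_singleton.1 hr
        subst hr
        have := ContextFreeGrammar.GCFG.derivesIn_terminal_map_injOn (w := x) hd
        exact this ▸ rfl
  · intro h
    replace h : w = x := h
    subst h
    exact ContextFreeGrammar.Produces.single
      ⟨_, Finset.mem_singleton_self _, ContextFreeRule.Rewrites.input_output⟩

end HypApp

/-- If `S` is a word-hyperbolic semigroup with respect to a regular combing
`R ⊆ A⁺`, and every element of `S` has a right stabiliser, then `S` is
`1`-extendable: `S^1` is word-hyperbolic with respect to the regular combing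
`R ∪ {ε}`. -/
theorem right_stabiliser_one_extendable {A S : Type*} [Fintype A] [Semigroup S]
    (f : A → S)
    (hgen : ∀ s : S, ∃ w : List A, w ≠ [] ∧ evalW f w = ↑s)
    (R : Language A) (hRne : ∀ w ∈ R, w ≠ [])
    (hreg : R.IsRegular)
    (hcomb : ∀ s : S, ∃ w ∈ R, evalW f w = ↑s)
    (htab : (tableS f R).IsContextFree)
    (hstab : ∀ s : S, ∃ t : S, s * t = s) :
    (R + {[]} : Language A).IsRegular ∧
    (∀ x : WithOne S, ∃ w ∈ (R + {[]} : Language A), evalW f w = x) ∧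
    (tableS f (R + {[]})).IsContextFree := by
  classical
  refine ⟨HypApp.regular_add_eps R hreg, ?_, ?_⟩
  · -- the combing
    intro x
    induction x using WithOne.recOneCoe with
    | one => exact ⟨[], (Language.mem_add _ _ _).2 (Or.inr rfl), rfl⟩
    | coe s =>
        obtain ⟨w, hw, he⟩ := hcomb s
        exact ⟨w, (Language.mem_add _ _ _).2 (Or.inl hw), he⟩
  · -- the table
    by_cases hS : Nonempty S
    · -- main case
      choose t ht using fun a : A => hstab (f a)
      choose wa hwaR hwaE using fun a : A => hcomb (t a)
      have hstabW : ∀ (γ : List A) (a : A),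
          evalW f ((γ ++ [a]) ++ wa a) = evalW f (γ ++ [a]) := by
        intro γ a
        rw [HypApp.evalW_append, hwaE, HypApp.evalW_append, mul_assoc]
        congr 1
        show evalW f [a] * ↑(t a) = evalW f [a]
        have : evalW f [a] = (↑(f a) : WithOne S) := by simp [evalW]
        rw [this, ← WithOne.coe_mul, ht a]
      have hIm : (HypApp.mach wa).Image (tableS f R) = tableS f (R + {[]}) := by
        ext v
        constructor
        · rintro ⟨w, hwT, qf, hqf, hrun⟩
          rcases hrun with _ | ⟨htr, hrest⟩
          · simp [HypApp.mach] at hqf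
          ·
              cases htr with
              | idFirst =>
                  obtain ⟨rfl, rfl⟩ := HypApp.run_iSt _ _ _ hrest
                  obtain ⟨u, vv, x, hu, hvv, hx, he, hform⟩ := hwT
                  exact ⟨u, vv, x, (Language.mem_add _ _ _).2 (Or.inl hu),
                    (Language.mem_add _ _ _).2 (Or.inl hvv),
                    (Language.mem_add _ _ _).2 (Or.inl hx), he, by simpa using hform⟩
              | bFirst =>
                  obtain ⟨rfl, rfl⟩ := HypApp.run_bSt _ _ _ hrest
                  exact ⟨[], [], [], (Language.mem_add _ _ _).2 (Or.inr rfl),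
                    (Language.mem_add _ _ _).2 (Or.inr rfl),
                    (Language.mem_add _ _ _).2 (Or.inr rfl), rfl, by simp⟩
              | cFirst c =>
                  obtain ⟨γ, aa, l, rfl, rfl⟩ := HypApp.run_cCopy _ _ _ hrest hqf
                  obtain ⟨u, vv, x, hu, hvv, hx, he, hform⟩ := hwT
                  have hform2 : ((c :: γ) ++ [aa]).map Sum.inl ++ Sum.inr false ::
                      ((wa aa).map Sum.inl ++ Sum.inr true :: l.map Sum.inl) =
                      u.map Sum.inl ++ Sum.inr false ::
                      (vv.map Sum.inl ++ Sum.inr true :: x.reverse.map Sum.inl) := by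
                    rw [List.map_reverse]
                    simpa [List.append_assoc] using hform
                  obtain ⟨hueq, -, hrest2⟩ := HypApp.parse_marker _ hform2
                  obtain ⟨hvveq, -, hleq⟩ := HypApp.parse_marker _ hrest2
                  have hlx : l = x.reverse :=
                    List.map_injective_iff.2 Sum.inl_injective hleq
                  have heval : evalW f ([] ++ ((c :: γ) ++ [aa])) = evalW f x := by
                    rw [List.nil_append, ← hstabW (c :: γ) aa, hueq, hvveq]
                    exact he
                  refine ⟨[], (c :: γ) ++ [aa], x,
                    (Language.mem_add _ _ _).2 (Or.inr rfl),
                    (Language.mem_add _ _ _).2 (Or.inl (by rw [← hueq] at hu; exact hu)),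
                    (Language.mem_add _ _ _).2 (Or.inl hx), heval, ?_⟩
                  rw [← List.map_reverse]
                  simp [hlx, List.append_assoc]
              | cFirstGo aa =>
                  obtain ⟨l, rfl, rfl⟩ := HypApp.run_cGo aa _ _ _ hrest hqf
                  obtain ⟨u, vv, x, hu, hvv, hx, he, hform⟩ := hwT
                  have hform2 : (([] ++ [aa]).map Sum.inl (α := A)) ++ Sum.inr false ::
                      ((wa aa).map Sum.inl ++ Sum.inr true :: l.map Sum.inl) =
                      u.map Sum.inl ++ Sum.inr false ::
                      (vv.map Sum.inl ++ Sum.inr true :: x.reverse.map Sum.inl) := by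
                    rw [List.map_reverse]
                    simpa [List.append_assoc] using hform
                  obtain ⟨hueq, -, hrest2⟩ := HypApp.parse_marker _ hform2
                  obtain ⟨hvveq, -, hleq⟩ := HypApp.parse_marker _ hrest2
                  have hlx : l = x.reverse :=
                    List.map_injective_iff.2 Sum.inl_injective hleq
                  have heval : evalW f ([] ++ ([] ++ [aa])) = evalW f x := by
                    rw [List.nil_append, ← hstabW [] aa, hueq, hvveq]
                    exact he
                  refine ⟨[], [] ++ [aa], x,
                    (Language.mem_add _ _ _).2 (Or.inr rfl),
                    (Language.mem_add _ _ _).2 (Or.inl (by rw [← hueq] at hu; exact hu)),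
                    (Language.mem_add _ _ _).2 (Or.inl hx), heval, ?_⟩
                  rw [← List.map_reverse]
                  simp [hlx, List.append_assoc]
              | dFirst c =>
                  obtain ⟨γ, aa, l, rfl, rfl⟩ := HypApp.run_dCopy _ _ _ hrest hqf
                  obtain ⟨u, vv, x, hu, hvv, hx, he, hform⟩ := hwT
                  have hform2 : ((c :: γ) ++ [aa]).map Sum.inl ++ Sum.inr false ::
                      ((wa aa).map Sum.inl ++ Sum.inr true :: l.map Sum.inl) =
                      u.map Sum.inl ++ Sum.inr false ::
                      (vv.map Sum.inl ++ Sum.inr true :: x.reverse.map Sum.inl) := by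
                    rw [List.map_reverse]
                    simpa [List.append_assoc] using hform
                  obtain ⟨hueq, -, hrest2⟩ := HypApp.parse_marker _ hform2
                  obtain ⟨hvveq, -, hleq⟩ := HypApp.parse_marker _ hrest2
                  have hlx : l = x.reverse :=
                    List.map_injective_iff.2 Sum.inl_injective hleq
                  have heval : evalW f (((c :: γ) ++ [aa]) ++ []) = evalW f x := by
                    rw [List.append_nil, ← hstabW (c :: γ) aa, hueq, hvveq]
                    exact he
                  refine ⟨(c :: γ) ++ [aa], [], x,
                    (Language.mem_add _ _ _).2 (Or.inl (by rw [← hueq] at hu; exact hu)),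
                    (Language.mem_add _ _ _).2 (Or.inr rfl),
                    (Language.mem_add _ _ _).2 (Or.inl hx), heval, ?_⟩
                  rw [← List.map_reverse]
                  simp [hlx, List.append_assoc]
              | dFirstGo aa =>
                  obtain ⟨l, rfl, rfl⟩ := HypApp.run_dGo aa _ _ _ hrest hqf
                  obtain ⟨u, vv, x, hu, hvv, hx, he, hform⟩ := hwT
                  have hform2 : (([] ++ [aa]).map Sum.inl (α := A)) ++ Sum.inr false ::
                      ((wa aa).map Sum.inl ++ Sum.inr true :: l.map Sum.inl) =
                      u.map Sum.inl ++ Sum.inr false ::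
                      (vv.map Sum.inl ++ Sum.inr true :: x.reverse.map Sum.inl) := by
                    rw [List.map_reverse]
                    simpa [List.append_assoc] using hform
                  obtain ⟨hueq, -, hrest2⟩ := HypApp.parse_marker _ hform2
                  obtain ⟨hvveq, -, hleq⟩ := HypApp.parse_marker _ hrest2
                  have hlx : l = x.reverse :=
                    List.map_injective_iff.2 Sum.inl_injective hleq
                  have heval : evalW f (([] ++ [aa]) ++ []) = evalW f x := by
                    rw [List.append_nil, ← hstabW [] aa, hueq, hvveq]
                    exact he
                  refine ⟨[] ++ [aa], [], x,
                    (Language.mem_add _ _ _).2 (Or.inl (by rw [← hueq] at hu; exact hu)),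
                    (Language.mem_add _ _ _).2 (Or.inr rfl),
                    (Language.mem_add _ _ _).2 (Or.inl hx), heval, ?_⟩
                  rw [← List.map_reverse]
                  simp [hlx, List.append_assoc]
        · rintro ⟨u, vv, x, hu, hvv, hx, he, rfl⟩
          rcases (Language.mem_add _ _ _).1 hu with huR | hu0
          · rcases (Language.mem_add _ _ _).1 hvv with hvvR | hvv0
            · -- both nonempty: identity branch
              have hxR : x ∈ R := by
                rcases (Language.mem_add _ _ _).1 hx with hxR | hx0
                · exact hxR
                · exfalso
                  replace hx0 : x = [] := hx0
                  subst hx0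
                  exact HypApp.evalW_ne_one f (u ++ vv)
                    (by simp [hRne u huR]) (by simpa [evalW] using he)
              obtain ⟨c, u', rfl⟩ := List.exists_cons_of_ne_nil (hRne u huR)
              refine ⟨_, ⟨c :: u', vv, x, huR, hvvR, hxR, he, rfl⟩, .iSt, Or.inl rfl, ?_⟩
              have := CFTrans.NFT.Run.cons (HypApp.MTr.idFirst (wa := wa) (Sum.inl c))
                (HypApp.build_iSt (u'.map Sum.inl ++ [Sum.inr false] ++ vv.map Sum.inl ++
                  [Sum.inr true] ++ (x.map Sum.inl).reverse))
              simpa using this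
            · -- vv = []
              replace hvv0 : vv = [] := hvv0
              subst hvv0
              have hxR : x ∈ R := by
                rcases (Language.mem_add _ _ _).1 hx with hxR | hx0
                · exact hxR
                · exfalso
                  replace hx0 : x = [] := hx0
                  subst hx0
                  exact HypApp.evalW_ne_one f (u ++ [])
                    (by simp [hRne u huR]) (by simpa [evalW] using he)
              obtain ⟨γ, aa, hcc⟩ := (List.eq_nil_or_concat u).resolve_left (hRne u huR)
              rw [List.concat_eq_append] at hcc
              subst hcc
              have heval : evalW f ((γ ++ [aa]) ++ wa aa) = evalW f x := by
                rw [hstabW γ aa]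
                simpa using he
              refine ⟨(γ ++ [aa]).map Sum.inl ++ [Sum.inr false] ++ (wa aa).map Sum.inl ++
                  [Sum.inr true] ++ (x.map Sum.inl).reverse,
                ⟨γ ++ [aa], wa aa, x, huR, hwaR aa, hxR, heval, rfl⟩, .dEnd,
                Or.inr (Or.inr (Or.inr rfl)), ?_⟩
              have r1 := HypApp.build_start_dGo (wa := wa) γ aa
              have r2 := CFTrans.NFT.Run.cons (M := HypApp.mach wa) (HypApp.MTr.dHash (wa := wa) aa)
                (CFTrans.NFT.Run.nil _)
              have r3 := HypApp.build_dMatch (wa := wa) aa (wa aa) [] rfl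
              have r4 := CFTrans.NFT.Run.cons (M := HypApp.mach wa) (HypApp.MTr.dDone (wa := wa) aa)
                (CFTrans.NFT.Run.nil _)
              have r5 := HypApp.build_dEnd (wa := wa) x.reverse
              have := ((((r1.append r2).append r3).append r4).append r5)
              simpa [List.map_reverse, List.append_assoc] using this
          · -- u = []
            replace hu0 : u = [] := hu0
            subst hu0
            rcases (Language.mem_add _ _ _).1 hvv with hvvR | hvv0
            · -- u = [], vv ∈ R : C branch
              have hxR : x ∈ R := by
                rcases (Language.mem_add _ _ _).1 hx with hxR | hx0
                · exact hxR
                · exfalso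
                  replace hx0 : x = [] := hx0
                  subst hx0
                  exact HypApp.evalW_ne_one f ([] ++ vv)
                    (by simp [hRne vv hvvR]) (by simpa [evalW] using he)
              obtain ⟨γ, aa, hcc⟩ := (List.eq_nil_or_concat vv).resolve_left (hRne vv hvvR)
              rw [List.concat_eq_append] at hcc
              subst hcc
              have heval : evalW f ((γ ++ [aa]) ++ wa aa) = evalW f x := by
                rw [hstabW γ aa]
                simpa using he
              refine ⟨(γ ++ [aa]).map Sum.inl ++ [Sum.inr false] ++ (wa aa).map Sum.inl ++
                  [Sum.inr true] ++ (x.map Sum.inl).reverse,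
                ⟨γ ++ [aa], wa aa, x, hvvR, hwaR aa, hxR, heval, rfl⟩, .cEnd,
                Or.inr (Or.inr (Or.inl rfl)), ?_⟩
              have r1 := HypApp.build_start_cGo (wa := wa) γ aa
              have r2 := CFTrans.NFT.Run.cons (M := HypApp.mach wa) (HypApp.MTr.cHash (wa := wa) aa)
                (CFTrans.NFT.Run.nil _)
              have r3 := HypApp.build_cMatch (wa := wa) aa (wa aa) [] rfl
              have r4 := CFTrans.NFT.Run.cons (M := HypApp.mach wa) (HypApp.MTr.cDone (wa := wa) aa)
                (CFTrans.NFT.Run.nil _)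
              have r5 := HypApp.build_cEnd (wa := wa) x.reverse
              have := ((((r1.append r2).append r3).append r4).append r5)
              simpa [List.map_reverse, List.append_assoc] using this
            · -- u = [], vv = [] : B branch
              replace hvv0 : vv = [] := hvv0
              subst hvv0
              have hx0 : x = [] := by
                rcases (Language.mem_add _ _ _).1 hx with hxR | hx0
                · exfalso
                  obtain ⟨s, hs⟩ := HypApp.evalW_exists_coe f x (hRne x hxR)
                  rw [hs] at he
                  exact WithOne.coe_ne_one (a := s) (by simpa [evalW] using he.symm)
                · exact hx0
              subst hx0
              obtain ⟨s0⟩ := hS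
              obtain ⟨u0, hu0R, -⟩ := hcomb s0
              obtain ⟨γ0, a0, hcc⟩ := (List.eq_nil_or_concat u0).resolve_left (hRne u0 hu0R)
              rw [List.concat_eq_append] at hcc
              subst hcc
              have hwT : ((γ0 ++ [a0]).map Sum.inl ++ [Sum.inr false] ++
                  (wa a0).map Sum.inl ++ [Sum.inr true] ++
                  ((γ0 ++ [a0]).map Sum.inl).reverse) ∈ tableS f R :=
                ⟨γ0 ++ [a0], wa a0, γ0 ++ [a0], hu0R, hwaR a0, hu0R, hstabW γ0 a0, rfl⟩
              obtain ⟨c0, w0', hw0⟩ := List.exists_cons_of_ne_nil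
                (show ((γ0 ++ [a0]).map Sum.inl ++ [Sum.inr false] ++
                  (wa a0).map Sum.inl ++ [Sum.inr true] ++
                  ((γ0 ++ [a0]).map Sum.inl).reverse) ≠ [] by simp)
              refine ⟨_, hwT, .bSt, Or.inr (Or.inl rfl), ?_⟩
              rw [hw0]
              have := CFTrans.NFT.Run.cons (HypApp.MTr.bFirst (wa := wa) c0)
                (HypApp.build_bSt w0')
              simpa using this
      have hCF := CFTrans.NFT.image_isContextFree (HypApp.mach wa) htab
      rwa [hIm] at hCF
    · -- S empty
      have hA : IsEmpty A := ⟨fun a => hS ⟨f a⟩⟩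
      have hnil : ∀ l : List A, l = [] := by
        intro l
        cases l with
        | nil => rfl
        | cons a _ => exact (hA.false a).elim
      have htab' : tableS f (R + {[]}) = {[Sum.inr false, Sum.inr true]} := by
        ext w
        constructor
        · rintro ⟨u, vv, x, -, -, -, -, rfl⟩
          rw [hnil u, hnil vv, hnil x]
          rfl
        · intro hw
          replace hw : w = [Sum.inr false, Sum.inr true] := hw
          subst hw
          exact ⟨[], [], [], (Language.mem_add _ _ _).2 (Or.inr rfl),
            (Language.mem_add _ _ _).2 (Or.inr rfl),
            (Language.mem_add _ _ _).2 (Or.inr rfl), rfl, rfl⟩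
      rw [htab']
      exact HypApp.singleton_isContextFree _
end

section
/- Every von Neumann regular semigroup that is word-hyperbolic is 1-extendable. -/
namespace CFGAux
open ContextFreeGrammar

universe uT uN
variable {T : Type uT}

/-- Parse-tree style characterization of derivations to terminal words. -/
inductive ParsesL (g : ContextFreeGrammar T) : List (Symbol T g.NT) → List T → Prop
  | nil : ParsesL g [] []
  | term {s : List (Symbol T g.NT)} {w : List T} (c : T) (h : ParsesL g s w) :
      ParsesL g (Symbol.terminal c :: s) (c :: w)
  | nont {X : g.NT} {β : List (Symbol T g.NT)} {w₁ : List T} {s : List (Symbol T g.NT)}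
      {w₂ : List T}
      (hr : (⟨X, β⟩ : ContextFreeRule T g.NT) ∈ g.rules)
      (h₁ : ParsesL g β w₁) (h₂ : ParsesL g s w₂) :
      ParsesL g (Symbol.nonterminal X :: s) (w₁ ++ w₂)

variable {g : ContextFreeGrammar T}

lemma ParsesL.append {s₁ s₂ : List (Symbol T g.NT)} {w₁ w₂ : List T}
    (h₁ : ParsesL g s₁ w₁) (h₂ : ParsesL g s₂ w₂) : ParsesL g (s₁ ++ s₂) (w₁ ++ w₂) := by
  induction h₁ with
  | nil => simpa using h₂
  | term c _ ih => exact ParsesL.term c ih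
  | nont hr hβ _ ihβ ih => simpa using ParsesL.nont hr hβ ih

lemma ParsesL.nil_iff {w : List T} : ParsesL g [] w ↔ w = [] := by
  constructor
  · intro h; cases h; rfl
  · rintro rfl; exact ParsesL.nil

lemma ParsesL.append_elim {s₁ s₂ : List (Symbol T g.NT)} {w : List T}
    (h : ParsesL g (s₁ ++ s₂) w) :
    ∃ w₁ w₂, w = w₁ ++ w₂ ∧ ParsesL g s₁ w₁ ∧ ParsesL g s₂ w₂ := by
  induction s₁ generalizing w with
  | nil => exact ⟨[], w, rfl, ParsesL.nil, by simpa using h⟩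
  | cons σ s₁ ih =>
    rw [List.cons_append] at h
    cases h with
    | term c h =>
      obtain ⟨w₁, w₂, rfl, hp₁, hp₂⟩ := ih h
      exact ⟨c :: w₁, w₂, rfl, ParsesL.term c hp₁, hp₂⟩
    | nont hr h₁ h₂ =>
      obtain ⟨w₁, w₂, rfl, hp₁, hp₂⟩ := ih h₂
      exact ⟨_ ++ w₁, w₂, by simp, ParsesL.nont hr h₁ hp₁, hp₂⟩

lemma ParsesL.cons_of_single {σ : Symbol T g.NT} {s : List (Symbol T g.NT)} {w₁ w₂ : List T}
    (h₁ : ParsesL g [σ] w₁) (h₂ : ParsesL g s w₂) : ParsesL g (σ :: s) (w₁ ++ w₂) := by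
  simpa using h₁.append h₂

lemma ParsesL.single_nont {X : g.NT} {β : List (Symbol T g.NT)} {w : List T}
    (hr : (⟨X, β⟩ : ContextFreeRule T g.NT) ∈ g.rules) (h : ParsesL g β w) :
    ParsesL g [Symbol.nonterminal X] w := by
  simpa using ParsesL.nont hr h ParsesL.nil

lemma ParsesL.single_nont_elim {X : g.NT} {w : List T}
    (h : ParsesL g [Symbol.nonterminal X] w) :
    ∃ β, (⟨X, β⟩ : ContextFreeRule T g.NT) ∈ g.rules ∧ ParsesL g β w := by
  cases h with
  | nont hr h₁ h₂ =>
    cases h₂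
    exact ⟨_, hr, by simpa using h₁⟩

lemma ParsesL.terminals (w : List T) : ParsesL g (w.map Symbol.terminal) w := by
  induction w with
  | nil => exact ParsesL.nil
  | cons c w ih => exact ParsesL.term c ih

lemma ParsesL.terminals_elim {w v : List T} (h : ParsesL g (w.map Symbol.terminal) v) :
    v = w := by
  induction w generalizing v with
  | nil => cases h; rfl
  | cons c w ih =>
    cases h with
    | term _ h => rw [ih h]

lemma ParsesL.toDerives {s : List (Symbol T g.NT)} {w : List T} (h : ParsesL g s w) :
    g.Derives s (w.map Symbol.terminal) := by
  induction h with
  | nil => rfl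
  | term c _ ih =>
    simpa using ih.append_left [Symbol.terminal c]
  | @nont X β w₁ s' w₂ hr h₁ h₂ ih₁ ih₂ =>
    have step : g.Produces (Symbol.nonterminal X :: s') (β ++ s') := by
      refine ⟨⟨X, β⟩, hr, ?_⟩
      simpa using ContextFreeRule.rewrites_of_exists_parts ⟨X, β⟩ [] s'
    refine step.trans_derives ?_
    rw [List.map_append]
    exact Derives.trans (ih₁.append_right _) (Derives.append_left ih₂ _)

lemma ParsesL.of_produces {u v : List (Symbol T g.NT)} {w : List T}
    (hp : g.Produces u v) (h : ParsesL g v w) : ParsesL g u w := by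
  obtain ⟨r, hr, hrw⟩ := hp
  obtain ⟨p, q, rfl, rfl⟩ := hrw.exists_parts
  obtain ⟨w₁, w₂₃, rfl, hp₁, h₂₃⟩ := (by simpa using h : ParsesL g (p ++ (r.output ++ q)) w).append_elim
  obtain ⟨w₂, w₃, rfl, hp₂, hp₃⟩ := h₂₃.append_elim
  have : ParsesL g [Symbol.nonterminal r.input] w₂ := ParsesL.single_nont (by exact hr) hp₂
  simpa using hp₁.append (this.append hp₃)

lemma parsesL_iff_derives {s : List (Symbol T g.NT)} {w : List T} :
    ParsesL g s w ↔ g.Derives s (w.map Symbol.terminal) := by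
  constructor
  · exact ParsesL.toDerives
  · intro h
    induction h using Relation.ReflTransGen.head_induction_on with
    | refl => exact ParsesL.terminals w
    | head hp _ ih => exact ParsesL.of_produces hp ih

lemma mem_language_iff_parsesL {w : List T} :
    w ∈ g.language ↔ ParsesL g [Symbol.nonterminal g.initial] w := by
  rw [mem_language_iff]
  exact parsesL_iff_derives.symm

section Maps
variable {N N' : Type*}

/-- Map nonterminals in a symbol. -/
def mapS (φ : N → N') : Symbol T N → Symbol T N'
  | .terminal t => .terminal t
  | .nonterminal X => .nonterminal (φ X)

@[simp] lemma mapS_terminal (φ : N → N') (t : T) :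
    mapS φ (Symbol.terminal t) = Symbol.terminal t := rfl
@[simp] lemma mapS_nonterminal (φ : N → N') (X : N) :
    (mapS φ (Symbol.nonterminal X) : Symbol T N') = Symbol.nonterminal (φ X) := rfl

/-- Map nonterminals in a rule. -/
def mapRule (φ : N → N') (r : ContextFreeRule T N) : ContextFreeRule T N' :=
  ⟨φ r.input, r.output.map (mapS φ)⟩

end Maps

section PushPull
variable {g g' : ContextFreeGrammar T} {φ : g.NT → g'.NT}

lemma ParsesL.push (hrules : ∀ r ∈ g.rules, mapRule φ r ∈ g'.rules)
    {s : List (Symbol T g.NT)} {w : List T} (h : ParsesL g s w) :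
    ParsesL g' (s.map (mapS φ)) w := by
  induction h with
  | nil => exact ParsesL.nil
  | term c _ ih => exact ParsesL.term c ih
  | @nont X β w₁ s' w₂ hr h₁ h₂ ih₁ ih₂ =>
    have := hrules ⟨X, β⟩ hr
    exact ParsesL.nont (by exact this) ih₁ ih₂

lemma ParsesL.pull_aux
    (hrules : ∀ r' ∈ g'.rules, ∀ X : g.NT, r'.input = φ X →
      ∃ β, (⟨X, β⟩ : ContextFreeRule T g.NT) ∈ g.rules ∧ r'.output = β.map (mapS φ)) :
    ∀ {s' : List (Symbol T g'.NT)} {w : List T}, ParsesL g' s' w →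
      ∀ s : List (Symbol T g.NT), s' = s.map (mapS φ) → ParsesL g s w := by
  intro s' w h
  induction h with
  | nil =>
    intro s hs
    rw [eq_comm, List.map_eq_nil_iff] at hs
    subst hs; exact ParsesL.nil
  | term c h ih =>
    intro s hs
    cases s with
    | nil => simp at hs
    | cons σ s =>
      simp only [List.map_cons, List.cons.injEq] at hs
      obtain ⟨hσ, hs⟩ := hs
      cases σ with
      | terminal t =>
        simp only [mapS_terminal, Symbol.terminal.injEq] at hσ
        subst hσ
        exact ParsesL.term c (ih s hs)
      | nonterminal X => simp [mapS] at hσ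
  | @nont X' β' w₁ s₁' w₂ hr h₁ h₂ ih₁ ih₂ =>
    intro s hs
    cases s with
    | nil => simp at hs
    | cons σ s =>
      simp only [List.map_cons, List.cons.injEq] at hs
      obtain ⟨hσ, hs⟩ := hs
      cases σ with
      | terminal t => simp [mapS] at hσ
      | nonterminal X =>
        simp only [mapS_nonterminal, Symbol.nonterminal.injEq] at hσ
        obtain ⟨β, hβmem, hβ⟩ := hrules ⟨X', β'⟩ hr X hσ
        exact ParsesL.nont hβmem (ih₁ β hβ) (ih₂ s hs)

lemma ParsesL.pull
    (hrules : ∀ r' ∈ g'.rules, ∀ X : g.NT, r'.input = φ X →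
      ∃ β, (⟨X, β⟩ : ContextFreeRule T g.NT) ∈ g.rules ∧ r'.output = β.map (mapS φ))
    {s : List (Symbol T g.NT)} {w : List T} (h : ParsesL g' (s.map (mapS φ)) w) :
    ParsesL g s w :=
  ParsesL.pull_aux hrules h s rfl

end PushPull

section Constructions

open Classical in
@[reducible] noncomputable def gUnion (g₁ g₂ : ContextFreeGrammar T) : ContextFreeGrammar T where
  NT := Option (g₁.NT ⊕ g₂.NT)
  initial := none
  rules :=
    insert ⟨none, [Symbol.nonterminal (some (Sum.inl g₁.initial))]⟩
      (insert ⟨none, [Symbol.nonterminal (some (Sum.inr g₂.initial))]⟩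
        ((g₁.rules.image (mapRule (some ∘ Sum.inl))) ∪
          (g₂.rules.image (mapRule (some ∘ Sum.inr)))))

theorem gUnion_language (g₁ g₂ : ContextFreeGrammar T) :
    (gUnion g₁ g₂).language = g₁.language + g₂.language := by
  classical
  ext w
  rw [mem_language_iff_parsesL, Language.mem_add, mem_language_iff_parsesL,
    mem_language_iff_parsesL]
  have hpull₁ : ∀ r' ∈ (gUnion g₁ g₂).rules, ∀ X : g₁.NT,
      r'.input = (some (Sum.inl X) : Option (g₁.NT ⊕ g₂.NT)) →
      ∃ β, (⟨X, β⟩ : ContextFreeRule T g₁.NT) ∈ g₁.rules ∧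
        r'.output = β.map (mapS (some ∘ Sum.inl)) := by
    intro r' hr' X hX
    simp only [gUnion, Finset.mem_insert, Finset.mem_union, Finset.mem_image] at hr'
    rcases hr' with rfl | rfl | ⟨r, hr, rfl⟩ | ⟨r, hr, rfl⟩
    · simp at hX
    · simp at hX
    · obtain ⟨rX, rβ⟩ := r
      obtain rfl : rX = X := by
        have hX' : some (Sum.inl rX) = some (Sum.inl X) := hX
        injection hX' with h1
        injection h1
      exact ⟨rβ, hr, rfl⟩
    · obtain ⟨rX, rβ⟩ := r
      have hX' : some (Sum.inr rX) = some (Sum.inl X) := hX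
      injection hX' with h1
      cases h1
  have hpull₂ : ∀ r' ∈ (gUnion g₁ g₂).rules, ∀ X : g₂.NT,
      r'.input = (some (Sum.inr X) : Option (g₁.NT ⊕ g₂.NT)) →
      ∃ β, (⟨X, β⟩ : ContextFreeRule T g₂.NT) ∈ g₂.rules ∧
        r'.output = β.map (mapS (some ∘ Sum.inr)) := by
    intro r' hr' X hX
    simp only [gUnion, Finset.mem_insert, Finset.mem_union, Finset.mem_image] at hr'
    rcases hr' with rfl | rfl | ⟨r, hr, rfl⟩ | ⟨r, hr, rfl⟩
    · simp at hX
    · simp at hX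
    · obtain ⟨rX, rβ⟩ := r
      have hX' : some (Sum.inl rX) = some (Sum.inr X) := hX
      injection hX' with h1
      cases h1
    · obtain ⟨rX, rβ⟩ := r
      obtain rfl : rX = X := by
        have hX' : some (Sum.inr rX) = some (Sum.inr X) := hX
        injection hX' with h1
        injection h1
      exact ⟨rβ, hr, rfl⟩
  constructor
  · intro h
    obtain ⟨β, hβmem, hβ⟩ := h.single_nont_elim
    have hβmem' : (⟨none, β⟩ : ContextFreeRule T (gUnion g₁ g₂).NT) ∈ (gUnion g₁ g₂).rules :=
      hβmem
    simp only [gUnion, Finset.mem_insert, Finset.mem_union, Finset.mem_image] at hβmem'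
    rcases hβmem' with hrule | hrule | ⟨r, hr, hru⟩ | ⟨r, hr, hru⟩
    · simp only [ContextFreeRule.mk.injEq, true_and] at hrule
      subst hrule
      left
      exact ParsesL.pull hpull₁ (by simpa using hβ)
    · simp only [ContextFreeRule.mk.injEq, true_and] at hrule
      subst hrule
      right
      exact ParsesL.pull hpull₂ (by simpa using hβ)
    · simp [mapRule, ContextFreeRule.mk.injEq] at hru
    · simp [mapRule, ContextFreeRule.mk.injEq] at hru
  · intro h
    rcases h with h | h
    · have hpush : ∀ r ∈ g₁.rules, mapRule (some ∘ Sum.inl) r ∈ (gUnion g₁ g₂).rules := by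
        intro r hr
        simp only [gUnion, Finset.mem_insert, Finset.mem_union, Finset.mem_image]
        exact Or.inr (Or.inr (Or.inl ⟨r, hr, rfl⟩))
      have h2 := h.push hpush
      show ParsesL (gUnion g₁ g₂) [Symbol.nonterminal none] w
      refine ParsesL.single_nont (g := gUnion g₁ g₂) ?_ (by simpa using h2)
      simp [gUnion]
    · have hpush : ∀ r ∈ g₂.rules, mapRule (some ∘ Sum.inr) r ∈ (gUnion g₁ g₂).rules := by
        intro r hr
        simp only [gUnion, Finset.mem_insert, Finset.mem_union, Finset.mem_image]
        exact Or.inr (Or.inr (Or.inr ⟨r, hr, rfl⟩))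
      have h2 := h.push hpush
      show ParsesL (gUnion g₁ g₂) [Symbol.nonterminal none] w
      refine ParsesL.single_nont (g := gUnion g₁ g₂) ?_ (by simpa using h2)
      simp [gUnion]

open Classical in
@[reducible] noncomputable def gPrepend (p : List T) (g : ContextFreeGrammar T) :
    ContextFreeGrammar T where
  NT := Option g.NT
  initial := none
  rules :=
    insert ⟨none, p.map Symbol.terminal ++ [Symbol.nonterminal (some g.initial)]⟩
      (g.rules.image (mapRule some))

theorem gPrepend_language (p : List T) (g : ContextFreeGrammar T) :
    (gPrepend p g).language = {x | ∃ w ∈ g.language, x = p ++ w} := by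
  classical
  ext v
  rw [mem_language_iff_parsesL]
  have hpull : ∀ r' ∈ (gPrepend p g).rules, ∀ X : g.NT,
      r'.input = (some X : Option g.NT) →
      ∃ β, (⟨X, β⟩ : ContextFreeRule T g.NT) ∈ g.rules ∧ r'.output = β.map (mapS some) := by
    intro r' hr' X hX
    simp only [gPrepend, Finset.mem_insert, Finset.mem_image] at hr'
    rcases hr' with rfl | ⟨r, hr, rfl⟩
    · simp at hX
    · obtain ⟨rX, rβ⟩ := r
      obtain rfl : rX = X := by
        have hX' : some rX = some X := hX
        injection hX'
      exact ⟨rβ, hr, rfl⟩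
  constructor
  · intro h
    obtain ⟨β, hβmem, hβ⟩ := h.single_nont_elim
    have hβmem' : (⟨none, β⟩ : ContextFreeRule T (gPrepend p g).NT) ∈ (gPrepend p g).rules :=
      hβmem
    simp only [gPrepend, Finset.mem_insert, Finset.mem_image] at hβmem'
    rcases hβmem' with hrule | ⟨r, hr, hru⟩
    · simp only [ContextFreeRule.mk.injEq, true_and] at hrule
      subst hrule
      obtain ⟨w₁, w₂, rfl, hw₁, hw₂⟩ := hβ.append_elim
      have hw₁' : w₁ = p := hw₁.terminals_elim
      subst hw₁'
      refine ⟨w₂, ?_, rfl⟩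
      rw [mem_language_iff_parsesL]
      exact ParsesL.pull hpull (by simpa using hw₂)
    · simp [mapRule, ContextFreeRule.mk.injEq] at hru
  · rintro ⟨w, hw, rfl⟩
    rw [mem_language_iff_parsesL] at hw
    have hpush : ∀ r ∈ g.rules, mapRule some r ∈ (gPrepend p g).rules := by
      intro r hr
      simp only [gPrepend, Finset.mem_insert, Finset.mem_image]
      exact Or.inr ⟨r, hr, rfl⟩
    have h2 := hw.push hpush
    show ParsesL (gPrepend p g) [Symbol.nonterminal none] (p ++ w)
    have hmem : (⟨none, p.map Symbol.terminal ++ [Symbol.nonterminal (some g.initial)]⟩ :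
        ContextFreeRule T (gPrepend p g).NT) ∈ (gPrepend p g).rules := by
      simp [gPrepend]
    exact ParsesL.single_nont hmem ((ParsesL.terminals p).append (by simpa using h2))

@[reducible]
def gSingleton (p : List T) : ContextFreeGrammar T where
  NT := PUnit
  initial := PUnit.unit
  rules := {⟨PUnit.unit, p.map Symbol.terminal⟩}

theorem gSingleton_language (p : List T) :
    (gSingleton p : ContextFreeGrammar T).language = {p} := by
  ext v
  rw [mem_language_iff_parsesL]
  constructor
  · intro h
    obtain ⟨β, hβmem, hβ⟩ := h.single_nont_elim
    simp only [gSingleton, Finset.mem_singleton, ContextFreeRule.mk.injEq, true_and] at hβmem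
    subst hβmem
    exact (by simpa using hβ.terminals_elim : v = p)
  · intro hv
    rw [show v = p from hv]
    have hmem : (⟨PUnit.unit, p.map Symbol.terminal⟩ :
        ContextFreeRule T (gSingleton p : ContextFreeGrammar T).NT) ∈
        (gSingleton p : ContextFreeGrammar T).rules := by
      simp [gSingleton]
    exact ParsesL.single_nont hmem (ParsesL.terminals p)

end Constructions

section Hom
variable {T' : Type uT}

/-- Substitute terminals in a symbol by words. -/
def homS (φ : T → List T') {N : Type uN} : Symbol T N → List (Symbol T' N)
  | .terminal t => (φ t).map Symbol.terminal
  | .nonterminal X => [Symbol.nonterminal X]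

@[simp] lemma homS_terminal (φ : T → List T') {N : Type uN} (t : T) :
    homS φ (Symbol.terminal t : Symbol T N) = (φ t).map Symbol.terminal := rfl
@[simp] lemma homS_nonterminal (φ : T → List T') {N : Type uN} (X : N) :
    homS φ (Symbol.nonterminal X : Symbol T N) = [Symbol.nonterminal X] := rfl

open Classical in
@[reducible] noncomputable def gHom (φ : T → List T') (g : ContextFreeGrammar T) :
    ContextFreeGrammar T' where
  NT := g.NT
  initial := g.initial
  rules := g.rules.image fun r => ⟨r.input, r.output.flatMap (homS φ)⟩

variable {φ : T → List T'} {g : ContextFreeGrammar T}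

lemma flatMap_eq_nil_of_null {α β : Type*} {l : List α} {f : α → List β}
    (h : ∀ x ∈ l, f x = []) : l.flatMap f = [] := by
  induction l with
  | nil => rfl
  | cons a l ih =>
    simp only [List.flatMap_cons, h a (by simp), List.nil_append]
    exact ih fun x hx => h x (by simp [hx])

lemma homS_flat_eq_nil {s : List (Symbol T g.NT)} (h : s.flatMap (homS φ) = []) :
    ∃ ts : List T, s = ts.map Symbol.terminal ∧ ∀ t ∈ ts, φ t = [] := by
  induction s with
  | nil => exact ⟨[], rfl, by simp⟩
  | cons σ s ih =>
    rw [List.flatMap_cons, List.append_eq_nil_iff] at h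
    obtain ⟨h1, h2⟩ := h
    obtain ⟨ts, rfl, hnull⟩ := ih h2
    cases σ with
    | terminal t =>
      simp only [homS_terminal, List.map_eq_nil_iff] at h1
      refine ⟨t :: ts, by simp, ?_⟩
      intro x hx
      rcases List.mem_cons.mp hx with rfl | hx'
      · exact h1
      · exact hnull x hx' 
    | nonterminal X => simp at h1

lemma homS_flat_peel {s : List (Symbol T g.NT)} {y : Symbol T' g.NT}
    {rest : List (Symbol T' g.NT)} (h : s.flatMap (homS φ) = y :: rest) :
    ∃ (ts : List T) (σ : Symbol T g.NT) (s₁ : List (Symbol T g.NT))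
      (ys : List (Symbol T' g.NT)),
      s = ts.map Symbol.terminal ++ σ :: s₁ ∧ (∀ t ∈ ts, φ t = []) ∧
        homS φ σ = y :: ys ∧ rest = ys ++ s₁.flatMap (homS φ) := by
  induction s with
  | nil => simp at h
  | cons σ s ih =>
    rw [List.flatMap_cons] at h
    cases hσ : homS φ σ with
    | nil =>
      rw [hσ, List.nil_append] at h
      obtain ⟨ts, σ', s₁, ys, rfl, hnull, hσ', hrest⟩ := ih h
      cases σ with
      | terminal t =>
        simp only [homS_terminal, List.map_eq_nil_iff] at hσ
        refine ⟨t :: ts, σ', s₁, ys, by simp, ?_, hσ', hrest⟩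
        intro x hx
        rcases List.mem_cons.mp hx with rfl | hx'
        · exact hσ
        · exact hnull x hx' 
      | nonterminal X => simp at hσ
    | cons y' ys' =>
      rw [hσ] at h
      rw [List.cons_append, List.cons.injEq] at h
      obtain ⟨rfl, h⟩ := h
      exact ⟨[], σ, s, ys', by simp, by simp, hσ, h.symm⟩

lemma gHom_complete {s : List (Symbol T g.NT)} {w : List T} (h : ParsesL g s w) :
    ParsesL (gHom φ g) (s.flatMap (homS φ)) (w.flatMap φ) := by
  induction h with
  | nil => exact ParsesL.nil
  | term c _ ih =>
    rw [List.flatMap_cons, List.flatMap_cons]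
    exact (ParsesL.terminals (g := gHom φ g) (φ c)).append ih
  | @nont X β w₁ s' w₂ hr h₁ h₂ ih₁ ih₂ =>
    rw [List.flatMap_cons, List.flatMap_append]
    have hr' : (⟨X, β.flatMap (homS φ)⟩ : ContextFreeRule T' (gHom φ g).NT) ∈
        (gHom φ g).rules := by
      classical
      simp only [gHom, Finset.mem_image]
      exact ⟨⟨X, β⟩, hr, rfl⟩
    simpa using ParsesL.nont hr' ih₁ ih₂

lemma gHom_sound :
    ∀ {s' : List (Symbol T' (gHom φ g).NT)} {w' : List T'}, ParsesL (gHom φ g) s' w' →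
    ∀ (p : List T') (s : List (Symbol T g.NT)),
      s' = p.map Symbol.terminal ++ s.flatMap (homS φ) →
      ∃ w, w' = p ++ w.flatMap φ ∧ ParsesL g s w := by
  intro s' w' h
  induction h with
  | nil =>
    intro p s hs
    rw [eq_comm, List.append_eq_nil_iff, List.map_eq_nil_iff] at hs
    obtain ⟨rfl, hs⟩ := hs
    obtain ⟨ts, rfl, hnull⟩ := homS_flat_eq_nil hs
    exact ⟨ts, by simp [flatMap_eq_nil_of_null hnull], ParsesL.terminals ts⟩
  | @term s'' w'' c h ih =>
    intro p s hs
    cases p with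
    | cons d p' =>
      simp only [List.map_cons, List.cons_append, List.cons.injEq] at hs
      obtain ⟨hdc, hs⟩ := hs
      injection hdc with hdc
      subst hdc
      obtain ⟨w, rfl, hp⟩ := ih p' s hs
      exact ⟨w, rfl, hp⟩
    | nil =>
      rw [List.map_nil, List.nil_append] at hs
      obtain ⟨ts, σ, s₁, ys, rfl, hnull, hσ, hrest⟩ := homS_flat_peel hs.symm
      cases σ with
      | nonterminal X => simp at hσ
      | terminal t =>
        simp only [homS_terminal] at hσ
        rw [List.map_eq_cons_iff] at hσ
        obtain ⟨c', cs, hφt, hc', hys⟩ := hσ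
        injection hc' with hc'
        subst hc'
        obtain ⟨w₁, rfl, hp₁⟩ := ih cs s₁ (by rw [hrest, ← hys])
        refine ⟨ts ++ t :: w₁, ?_, ?_⟩
        · have heq : (ts ++ t :: w₁).flatMap φ = φ t ++ w₁.flatMap φ := by
            rw [List.flatMap_append, flatMap_eq_nil_of_null hnull]
            simp
          rw [heq, hφt]
          simp
        · exact (ParsesL.terminals ts).append (ParsesL.term t hp₁)
  | @nont X' β' w₁ s₁' w₂ hr h₁ h₂ ih₁ ih₂ =>
    intro p s hs
    cases p with
    | cons d p' => simp at hs
    | nil =>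
      rw [List.map_nil, List.nil_append] at hs
      obtain ⟨ts, σ, s₁, ys, rfl, hnull, hσ, hrest⟩ := homS_flat_peel hs.symm
      cases σ with
      | terminal t =>
        simp only [homS_terminal] at hσ
        rw [List.map_eq_cons_iff] at hσ
        obtain ⟨c', cs, hφt, hc', hys⟩ := hσ
        exact absurd hc' (by simp)
      | nonterminal Y =>
        simp only [homS_nonterminal, List.cons.injEq] at hσ
        obtain ⟨hYX, rfl⟩ := hσ
        injection hYX with hYX
        subst hYX
        classical
        have hr' := hr
        simp only [gHom, Finset.mem_image] at hr'
        obtain ⟨r₀, hr₀, hr₀eq⟩ := hr'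
        obtain ⟨r₀X, r₀β⟩ := r₀
        simp only [ContextFreeRule.mk.injEq] at hr₀eq
        obtain ⟨rfl, hout⟩ := hr₀eq
        obtain ⟨wβ, rfl, hpβ⟩ := ih₁ [] r₀β (by rw [← hout]; simp)
        obtain ⟨w₂', rfl, hp₂⟩ := ih₂ [] s₁ (by rw [hrest]; simp)
        refine ⟨ts ++ (wβ ++ w₂'), ?_, ?_⟩
        · rw [List.flatMap_append, flatMap_eq_nil_of_null hnull, List.flatMap_append]
          simp
        · exact (ParsesL.terminals ts).append (ParsesL.nont hr₀ hpβ hp₂)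

theorem gHom_language (φ : T → List T') (g : ContextFreeGrammar T) :
    (gHom φ g).language = {x | ∃ w ∈ g.language, x = w.flatMap φ} := by
  ext v
  rw [mem_language_iff_parsesL]
  constructor
  · intro h
    obtain ⟨w, rfl, hp⟩ := gHom_sound h [] [Symbol.nonterminal g.initial]
      (by simp only [List.map_nil, List.nil_append, List.flatMap_cons, homS_nonterminal,
            List.flatMap_nil, List.append_nil])
    exact ⟨w, mem_language_iff_parsesL.mpr hp, by simp⟩
  · rintro ⟨w, hw, rfl⟩
    rw [mem_language_iff_parsesL] at hw
    have hc := gHom_complete (φ := φ) hw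
    simp only [List.flatMap_cons, homS_nonterminal, List.flatMap_nil, List.append_nil] at hc
    exact hc

end Hom

section Deriv

lemma drop_eq_take_drop_append {α : Type*} (l : List α) {i j : ℕ} (hij : i ≤ j) :
    l.drop i = (l.take j).drop i ++ l.drop j := by
  rcases le_or_gt j l.length with hj | hj
  · conv_lhs => rw [← List.take_append_drop j l]
    rw [List.drop_append_of_le_length (by rw [List.length_take]; omega)]
  · rw [List.take_of_length_le hj.le, List.drop_eq_nil_of_le hj.le, List.append_nil]

variable (g : ContextFreeGrammar T) (q : List T)

open Classical in
noncomputable def gDerivRuleSet (r : ContextFreeRule T g.NT) (i j k : ℕ) :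
    Finset (ContextFreeRule T (g.NT ⊕ (g.NT × ℕ))) :=
  if i ≤ j ∧ j ≤ q.length ∧ ParsesL g (r.output.take k) ((q.take j).drop i) then
    (if j = q.length then
      {⟨Sum.inr (r.input, i), (r.output.drop k).map (mapS Sum.inl)⟩}
    else
      (match r.output.drop k with
        | Symbol.nonterminal Y :: δ' =>
            {⟨Sum.inr (r.input, i),
              Symbol.nonterminal (Sum.inr (Y, j)) :: δ'.map (mapS Sum.inl)⟩}
        | _ => ∅))
  else ∅

open Classical in
@[reducible] noncomputable def gDeriv : ContextFreeGrammar T where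
  NT := g.NT ⊕ (g.NT × ℕ)
  initial := Sum.inr (g.initial, 0)
  rules := g.rules.image (mapRule Sum.inl) ∪
    g.rules.biUnion (fun r =>
      (Finset.range (q.length + 1) ×ˢ Finset.range (q.length + 1) ×ˢ
        Finset.range (r.output.length + 1)).biUnion
          (fun ijk => gDerivRuleSet g q r ijk.1 ijk.2.1 ijk.2.2))

lemma gDeriv_rules_inl {r : ContextFreeRule T g.NT} (hr : r ∈ g.rules) :
    mapRule Sum.inl r ∈ (gDeriv g q).rules := by
  classical
  simp only [gDeriv, Finset.mem_union, Finset.mem_image]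
  exact Or.inl ⟨r, hr, rfl⟩

lemma gDeriv_rules_inr₁ {X : g.NT} {β : List (Symbol T g.NT)} (hr : (⟨X, β⟩ :
      ContextFreeRule T g.NT) ∈ g.rules) {i k : ℕ} (hi : i ≤ q.length)
    (hk : k ≤ β.length)
    (hparse : ParsesL g (β.take k) (q.drop i)) :
    (⟨Sum.inr (X, i), (β.drop k).map (mapS Sum.inl)⟩ :
      ContextFreeRule T (gDeriv g q).NT) ∈ (gDeriv g q).rules := by
  classical
  simp only [gDeriv, Finset.mem_union, Finset.mem_biUnion, Finset.mem_product,
    Finset.mem_range]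
  refine Or.inr ⟨⟨X, β⟩, hr, ⟨i, q.length, k⟩,
    ⟨by show i < q.length + 1; omega, by show q.length < q.length + 1; omega,
      by show k < β.length + 1; omega⟩, ?_⟩
  show _ ∈ gDerivRuleSet g q ⟨X, β⟩ i q.length k
  rw [gDerivRuleSet, if_pos ⟨hi, le_refl _, by simpa [List.take_length] using hparse⟩,
    if_pos rfl]
  simp

lemma gDeriv_rules_inr₂ {X Y : g.NT} {β δ' : List (Symbol T g.NT)} (hr : (⟨X, β⟩ :
      ContextFreeRule T g.NT) ∈ g.rules) {i j k : ℕ} (hij : i ≤ j) (hj : j < q.length)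
    (hk : k ≤ β.length)
    (hparse : ParsesL g (β.take k) ((q.take j).drop i))
    (hsplit : β.drop k = Symbol.nonterminal Y :: δ') :
    (⟨Sum.inr (X, i), Symbol.nonterminal (Sum.inr (Y, j)) :: δ'.map (mapS Sum.inl)⟩ :
      ContextFreeRule T (gDeriv g q).NT) ∈ (gDeriv g q).rules := by
  classical
  simp only [gDeriv, Finset.mem_union, Finset.mem_biUnion, Finset.mem_product,
    Finset.mem_range]
  refine Or.inr ⟨⟨X, β⟩, hr, ⟨i, j, k⟩,
    ⟨by show i < q.length + 1; omega, by show j < q.length + 1; omega,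
      by show k < β.length + 1; omega⟩, ?_⟩
  show _ ∈ gDerivRuleSet g q ⟨X, β⟩ i j k
  rw [gDerivRuleSet, if_pos ⟨hij, hj.le, hparse⟩, if_neg (by omega : ¬ j = q.length)]
  rw [show (⟨X, β⟩ : ContextFreeRule T g.NT).output.drop k = Symbol.nonterminal Y :: δ'
    from hsplit]
  simp

lemma gDeriv_rules_inl_elim {r' : ContextFreeRule T (gDeriv g q).NT}
    (hr' : r' ∈ (gDeriv g q).rules) (X : g.NT) (hX : r'.input = Sum.inl X) :
    ∃ β, (⟨X, β⟩ : ContextFreeRule T g.NT) ∈ g.rules ∧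
      r'.output = β.map (mapS Sum.inl) := by
  classical
  have hr2 : r' ∈ g.rules.image (mapRule Sum.inl) ∪
      g.rules.biUnion (fun r =>
        (Finset.range (q.length + 1) ×ˢ Finset.range (q.length + 1) ×ˢ
          Finset.range (r.output.length + 1)).biUnion
            (fun ijk => gDerivRuleSet g q r ijk.1 ijk.2.1 ijk.2.2)) := hr'
  simp only [Finset.mem_union, Finset.mem_image, Finset.mem_biUnion] at hr2
  rcases hr2 with ⟨r, hr, rfl⟩ | ⟨r, hr, ⟨i, j, k⟩, _, hmem⟩
  · obtain ⟨rX, rβ⟩ := r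
    obtain rfl : rX = X := by
      have h' : (Sum.inl rX : g.NT ⊕ (g.NT × ℕ)) = Sum.inl X := hX
      injection h'
    exact ⟨rβ, hr, rfl⟩
  · exfalso
    rw [gDerivRuleSet] at hmem
    split at hmem
    · split at hmem
      · simp only [Finset.mem_singleton] at hmem
        subst hmem
        cases hX
      · revert hmem
        split
        · intro hmem
          simp only [Finset.mem_singleton] at hmem
          subst hmem
          cases hX
        · intro hmem
          exact absurd hmem (Finset.notMem_empty _)
    · exact absurd hmem (Finset.notMem_empty _)

lemma gDeriv_rules_inr_elim {r' : ContextFreeRule T (gDeriv g q).NT}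
    (hr' : r' ∈ (gDeriv g q).rules) (X : g.NT) (i : ℕ) (hX : r'.input = Sum.inr (X, i)) :
    ∃ β j k, (⟨X, β⟩ : ContextFreeRule T g.NT) ∈ g.rules ∧ i ≤ j ∧ j ≤ q.length ∧
      ParsesL g (β.take k) ((q.take j).drop i) ∧
      ((j = q.length ∧ r'.output = (β.drop k).map (mapS Sum.inl)) ∨
       (j < q.length ∧ ∃ Y δ', β.drop k = Symbol.nonterminal Y :: δ' ∧
          r'.output = Symbol.nonterminal (Sum.inr (Y, j)) :: δ'.map (mapS Sum.inl))) := by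
  classical
  have hr2 : r' ∈ g.rules.image (mapRule Sum.inl) ∪
      g.rules.biUnion (fun r =>
        (Finset.range (q.length + 1) ×ˢ Finset.range (q.length + 1) ×ˢ
          Finset.range (r.output.length + 1)).biUnion
            (fun ijk => gDerivRuleSet g q r ijk.1 ijk.2.1 ijk.2.2)) := hr'
  simp only [Finset.mem_union, Finset.mem_image, Finset.mem_biUnion] at hr2
  rcases hr2 with ⟨r, hr, rfl⟩ | ⟨r, hr, ⟨i', j', k'⟩, _, hmem⟩
  · exfalso
    obtain ⟨rX, rβ⟩ := r
    cases hX
  · obtain ⟨rX, rβ⟩ := r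
    rw [show gDerivRuleSet g q ⟨rX, rβ⟩ (i', j', k').1 (i', j', k').2.1 (i', j', k').2.2 =
      gDerivRuleSet g q ⟨rX, rβ⟩ i' j' k' from rfl, gDerivRuleSet] at hmem
    split at hmem
    case isTrue hcond =>
      obtain ⟨hij, hjq, hparse⟩ := hcond
      split at hmem
      case isTrue hjeq =>
        simp only [Finset.mem_singleton] at hmem
        subst hmem
        have hXs : (Sum.inr (rX, i') : g.NT ⊕ (g.NT × ℕ)) = Sum.inr (X, i) := hX
        injection hXs with hpair
        injection hpair with hX1 hX2
        subst hX1
        subst hX2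
        exact ⟨rβ, j', k', hr, hij, hjq, hparse, Or.inl ⟨hjeq, rfl⟩⟩
      case isFalse hjne =>
        revert hmem
        split
        case h_1 Y δ' heq =>
          intro hmem
          simp only [Finset.mem_singleton] at hmem
          subst hmem
          have hXs : (Sum.inr (rX, i') : g.NT ⊕ (g.NT × ℕ)) = Sum.inr (X, i) := hX
          injection hXs with hpair
          injection hpair with hX1 hX2
          subst hX1
          subst hX2
          exact ⟨rβ, j', k', hr, hij, hjq, hparse,
            Or.inr ⟨lt_of_le_of_ne hjq hjne, Y, δ', heq, rfl⟩⟩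
        case h_2 =>
          intro hmem
          exact absurd hmem (Finset.notMem_empty _)
    case isFalse =>
      exact absurd hmem (Finset.notMem_empty _)

lemma gDeriv_embed {s : List (Symbol T g.NT)} {w : List T} (h : ParsesL g s w) :
    ParsesL (gDeriv g q) (s.map (mapS Sum.inl)) w :=
  h.push (fun _ hr => gDeriv_rules_inl g q hr)

lemma gDeriv_unembed {s : List (Symbol T g.NT)} {w : List T}
    (h : ParsesL (gDeriv g q) (s.map (mapS Sum.inl)) w) : ParsesL g s w :=
  ParsesL.pull (fun r' hr' X hX => gDeriv_rules_inl_elim g q hr' X hX) h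

/-- Assembles decomposition data into a parse of a derived nonterminal. -/
lemma gDeriv_assemble {X : g.NT} {β : List (Symbol T g.NT)} {i : ℕ} {w : List T}
    (hr : (⟨X, β⟩ : ContextFreeRule T g.NT) ∈ g.rules)
    (H : ∃ γ δ j, β = γ ++ δ ∧ i ≤ j ∧ j ≤ q.length ∧
      ParsesL g γ ((q.take j).drop i) ∧
      ((j = q.length ∧ ParsesL (gDeriv g q) (δ.map (mapS Sum.inl)) w) ∨
       (j < q.length ∧ ∃ Y δ' w₁ w₂, δ = Symbol.nonterminal Y :: δ' ∧ w = w₁ ++ w₂ ∧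
          ParsesL (gDeriv g q) [Symbol.nonterminal (Sum.inr (Y, j))] w₁ ∧
          ParsesL (gDeriv g q) (δ'.map (mapS Sum.inl)) w₂))) :
    ParsesL (gDeriv g q) [Symbol.nonterminal (Sum.inr (X, i))] w := by
  obtain ⟨γ, δ, j, rfl, hij, hjq, hγ, hcase⟩ := H
  rcases hcase with ⟨rfl, hparse⟩ | ⟨hjlt, Y, δ', w₁, w₂, rfl, rfl, hp₁, hp₂⟩
  · have hrule := gDeriv_rules_inr₁ g q hr (i := i) (k := γ.length)
      (le_trans hij hjq) (by simp)
      (by rw [List.take_left]; simpa [List.take_length] using hγ)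
    rw [List.drop_left] at hrule
    exact ParsesL.single_nont hrule hparse
  · have hrule := gDeriv_rules_inr₂ g q hr (i := i) (j := j) (k := γ.length) hij hjlt
      (by simp) (by rwa [List.take_left]) (by rw [List.drop_left])
    exact ParsesL.single_nont hrule (ParsesL.cons_of_single hp₁ hp₂)

lemma seg_self_nil (j : ℕ) : ParsesL g [] ((q.take j).drop j) := by
  rw [List.drop_eq_nil_of_le (by rw [List.length_take]; omega)]
  exact ParsesL.nil

lemma gDeriv_sound_aux :
    ∀ {s' : List (Symbol T (gDeriv g q).NT)} {w : List T}, ParsesL (gDeriv g q) s' w →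
    ∀ (Y : g.NT) (j : ℕ) (s : List (Symbol T g.NT)), j ≤ q.length →
      s' = Symbol.nonterminal (Sum.inr (Y, j)) :: s.map (mapS Sum.inl) →
      ∃ w₁ w₂, w = w₁ ++ w₂ ∧ ParsesL g [Symbol.nonterminal Y] (q.drop j ++ w₁) ∧
        ParsesL g s w₂ := by
  intro s' w h
  induction h with
  | nil =>
    intro Y j s hj hs
    simp at hs
  | term c h ih =>
    intro Y j s hj hs
    rw [List.cons.injEq] at hs
    exact absurd hs.1 (by simp)
  | @nont X' β' w₁ s₁' w₂ hr h₁ h₂ ih₁ ih₂ =>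
    intro Y j s hj hs
    rw [List.cons.injEq] at hs
    obtain ⟨hX', hs₁⟩ := hs
    injection hX' with hX'
    subst hX'
    subst hs₁
    have h₂' : ParsesL g s w₂ := gDeriv_unembed g q h₂
    obtain ⟨β, j', k, hgr, hij, hjq, hparse, hcase⟩ :=
      gDeriv_rules_inr_elim g q hr Y j rfl
    rcases hcase with ⟨hjeq, hout⟩ | ⟨hjlt, Z, δ', hsplit, hout⟩
    · subst hjeq
      rw [List.take_length] at hparse
      have h₁' : ParsesL g (β.drop k) w₁ := gDeriv_unembed g q (hout ▸ h₁)
      refine ⟨w₁, w₂, rfl, ?_, h₂'⟩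
      refine ParsesL.single_nont hgr ?_
      have := hparse.append h₁'
      rwa [List.take_append_drop] at this
    · obtain ⟨wa, wb, rfl, hZ, hδ'⟩ := ih₁ Z j' δ' hjq hout
      refine ⟨wa ++ wb, w₂, rfl, ?_, h₂'⟩
      refine ParsesL.single_nont hgr ?_
      have hbody : ParsesL g (Symbol.nonterminal Z :: δ') ((q.drop j' ++ wa) ++ wb) :=
        ParsesL.cons_of_single hZ hδ'
      have := hparse.append hbody
      rw [← hsplit, List.take_append_drop] at this
      have heq : (q.take j').drop j ++ ((q.drop j' ++ wa) ++ wb) =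
          q.drop j ++ (wa ++ wb) := by
        rw [drop_eq_take_drop_append q hij]
        simp [List.append_assoc]
      rwa [heq] at this

lemma gDeriv_complete_aux :
    ∀ {s : List (Symbol T g.NT)} {t : List T}, ParsesL g s t →
    ∀ (i : ℕ) (w : List T), i ≤ q.length → t = q.drop i ++ w →
      ∃ γ δ j, s = γ ++ δ ∧ i ≤ j ∧ j ≤ q.length ∧ ParsesL g γ ((q.take j).drop i) ∧
        ((j = q.length ∧ ParsesL (gDeriv g q) (δ.map (mapS Sum.inl)) w) ∨
         (j < q.length ∧ ∃ Y δ' w₁ w₂, δ = Symbol.nonterminal Y :: δ' ∧ w = w₁ ++ w₂ ∧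
            ParsesL (gDeriv g q) [Symbol.nonterminal (Sum.inr (Y, j))] w₁ ∧
            ParsesL (gDeriv g q) (δ'.map (mapS Sum.inl)) w₂)) := by
  intro s t h
  induction h with
  | nil =>
    intro i w hi ht
    rw [eq_comm, List.append_eq_nil_iff] at ht
    obtain ⟨hd, rfl⟩ := ht
    have hilen : i = q.length := by
      have := List.drop_eq_nil_iff.mp hd
      omega
    subst hilen
    exact ⟨[], [], q.length, rfl, le_refl _, le_refl _, seg_self_nil g q _,
      Or.inl ⟨rfl, ParsesL.nil⟩⟩
  | @term s₀ w₀ c h ih =>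
    intro i w hi ht
    rcases eq_or_lt_of_le hi with hieq | hilt
    · subst hieq
      rw [List.drop_length, List.nil_append] at ht
      refine ⟨[], Symbol.terminal c :: s₀, q.length, rfl, le_refl _, le_refl _,
        seg_self_nil g q _, Or.inl ⟨rfl, ?_⟩⟩
      rw [← ht]
      exact gDeriv_embed g q (ParsesL.term c h)
    · rw [List.drop_eq_getElem_cons hilt, List.cons_append, List.cons.injEq] at ht
      obtain ⟨rfl, ht⟩ := ht
      obtain ⟨γ₀, δ, j, rfl, hij, hjq, hγ₀, hcase⟩ := ih (i + 1) w (by omega) ht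
      refine ⟨Symbol.terminal (q[i]'(by omega)) :: γ₀, δ, j, rfl, by omega, hjq, ?_, hcase⟩
      have hseg : (q.take j).drop i = q[i]'(by omega) :: (q.take j).drop (i + 1) := by
        rw [List.drop_eq_getElem_cons (by rw [List.length_take]; omega)]
        congr 1
        exact List.getElem_take
      rw [hseg]
      exact ParsesL.term _ hγ₀
  | @nont X β t₁ s₀ t₂ hr h₁ h₂ ih₁ ih₂ =>
    intro i w hi ht
    rcases eq_or_lt_of_le hi with hieq | hilt
    · subst hieq
      rw [List.drop_length, List.nil_append] at ht
      refine ⟨[], Symbol.nonterminal X :: s₀, q.length, rfl, le_refl _, le_refl _,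
        seg_self_nil g q _, Or.inl ⟨rfl, ?_⟩⟩
      rw [← ht]
      exact gDeriv_embed g q (ParsesL.nont hr h₁ h₂)
    · rcases List.append_eq_append_iff.mp ht with ⟨as, hq, ht₂⟩ | ⟨cs, ht₁, hw⟩
      · -- t₁ is a prefix of q.drop i  (case B)
        have hlen : t₁.length + as.length = q.length - i := by
          have := congrArg List.length hq
          simp [List.length_drop] at this
          omega
        set j := i + t₁.length with hjdef
        have hjq : j ≤ q.length := by omega
        have hq2 : (q.take j).drop i ++ q.drop j = t₁ ++ as := by
          rw [← drop_eq_take_drop_append q (by omega : i ≤ j), hq]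
        have hseglen : ((q.take j).drop i).length = t₁.length := by
          rw [List.length_drop, List.length_take]
          omega
        obtain ⟨hseg, hdropj⟩ := List.append_inj hq2 hseglen
        have ht₂' : t₂ = q.drop j ++ w := by rw [ht₂, hdropj]
        obtain ⟨γ₀, δ, j₀, rfl, hjj₀, hj₀q, hγ₀, hcase⟩ := ih₂ j w hjq ht₂'
        refine ⟨Symbol.nonterminal X :: γ₀, δ, j₀, rfl, by omega, hj₀q, ?_, hcase⟩
        have htrans : (q.take j₀).drop i = (q.take j).drop i ++ (q.take j₀).drop j := by
          have h1 : q.take j = (q.take j₀).take j := by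
            rw [List.take_take, min_eq_left hjj₀]
          rw [h1]
          exact drop_eq_take_drop_append (q.take j₀) (by omega : i ≤ j)
        rw [htrans, hseg]
        exact ParsesL.cons_of_single (ParsesL.single_nont hr h₁) hγ₀
      · -- t₁ straddles (case A)
        refine ⟨[], Symbol.nonterminal X :: s₀, i, rfl, le_refl _, hi,
          seg_self_nil g q _, Or.inr ⟨hilt, X, s₀, cs, t₂, rfl, hw, ?_, ?_⟩⟩
        · exact gDeriv_assemble g q hr (ih₁ i cs hi ht₁)
        · exact gDeriv_embed g q h₂

lemma lang_mem_setOf {p : List T → Prop} {a : List T} :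
    @Membership.mem (List T) (Language T) _ ({x | p x} : Set (List T)) a ↔ p a := Iff.rfl

theorem gDeriv_language :
    (gDeriv g q).language = {w | q ++ w ∈ g.language} := by
  ext w
  constructor
  · intro h
    rw [mem_language_iff_parsesL] at h
    obtain ⟨w₁, w₂, rfl, hp, hnil⟩ :=
      gDeriv_sound_aux g q h g.initial 0 [] (Nat.zero_le _) (by rfl)
    rw [ParsesL.nil_iff] at hnil
    subst hnil
    rw [lang_mem_setOf, mem_language_iff_parsesL]
    simpa using hp
  · intro h
    rw [lang_mem_setOf, mem_language_iff_parsesL] at h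
    obtain ⟨β, hβ, hp⟩ := h.single_nont_elim
    rw [mem_language_iff_parsesL]
    show ParsesL (gDeriv g q) [Symbol.nonterminal (Sum.inr (g.initial, 0))] w
    exact gDeriv_assemble g q hβ (gDeriv_complete_aux g q hp 0 w (Nat.zero_le _) (by simp))

end Deriv

section LangLevel

@[reducible]
def gEmpty : ContextFreeGrammar T where
  NT := PUnit
  initial := PUnit.unit
  rules := ∅

theorem gEmpty_language : (gEmpty : ContextFreeGrammar T).language = 0 := by
  ext v
  rw [mem_language_iff_parsesL]
  constructor
  · intro h
    obtain ⟨β, hβmem, -⟩ := h.single_nont_elim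
    exact absurd hβmem (Finset.notMem_empty _)
  · intro h
    simp at h

variable {γ : Type uT}

lemma cf_add {L M : Language γ} (hL : L.IsContextFree) (hM : M.IsContextFree) :
    (L + M).IsContextFree := by
  obtain ⟨g₁, rfl⟩ := hL
  obtain ⟨g₂, rfl⟩ := hM
  exact ⟨gUnion g₁ g₂, gUnion_language g₁ g₂⟩

lemma cf_zero : (0 : Language γ).IsContextFree :=
  ⟨gEmpty, gEmpty_language⟩

lemma cf_listSum : ∀ l : List (Language γ), (∀ L ∈ l, L.IsContextFree) →
    l.sum.IsContextFree := by
  intro l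
  induction l with
  | nil => intro _; simpa using cf_zero
  | cons L l ih =>
    intro h
    rw [List.sum_cons]
    exact cf_add (h L (by simp)) (ih fun M hM => h M (by simp [hM]))

lemma mem_listSum {l : List (Language γ)} {x : List γ} :
    x ∈ l.sum ↔ ∃ L ∈ l, x ∈ L := by
  induction l with
  | nil => simp
  | cons L l ih =>
    rw [List.sum_cons, Language.mem_add, ih]
    simp

lemma cf_singletonWord (p : List γ) : ({p} : Language γ).IsContextFree :=
  ⟨gSingleton p, gSingleton_language p⟩

lemma cf_prepend (p : List γ) {L : Language γ} (hL : L.IsContextFree) :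
    Language.IsContextFree ({x | ∃ w ∈ L, x = p ++ w} : Language γ) := by
  obtain ⟨g, rfl⟩ := hL
  exact ⟨gPrepend p g, gPrepend_language p g⟩

lemma cf_hom (φ : γ → List γ) {L : Language γ} (hL : L.IsContextFree) :
    Language.IsContextFree ({x | ∃ w ∈ L, x = w.flatMap φ} : Language γ) := by
  obtain ⟨g, rfl⟩ := hL
  exact ⟨gHom φ g, gHom_language φ g⟩

lemma cf_deriv (q : List γ) {L : Language γ} (hL : L.IsContextFree) :
    Language.IsContextFree ({w | q ++ w ∈ L} : Language γ) := by
  obtain ⟨g, rfl⟩ := hL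
  exact ⟨gDeriv g q, gDeriv_language g q⟩

end LangLevel

end CFGAux


-- ===== auxiliary semantic material =====

namespace OneExtAux

/-- The homomorphism sending `#2` to `#1 #2` and fixing all other letters. -/
def phi2 {A : Type*} : (A ⊕ Bool) → List (A ⊕ Bool)
  | Sum.inr true => [Sum.inr false, Sum.inr true]
  | c => [c]

@[simp] lemma phi2_inl {A : Type*} (a : A) :
    phi2 (Sum.inl a : A ⊕ Bool) = [Sum.inl a] := rfl
@[simp] lemma phi2_m1 {A : Type*} :
    phi2 (Sum.inr false : A ⊕ Bool) = [Sum.inr false] := rfl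
@[simp] lemma phi2_m2 {A : Type*} :
    phi2 (Sum.inr true : A ⊕ Bool) = [Sum.inr false, Sum.inr true] := rfl

lemma phi2_flat_inl {A : Type*} (l : List A) :
    (l.map Sum.inl).flatMap (phi2 (A := A)) = l.map Sum.inl := by
  induction l with
  | nil => rfl
  | cons a l ih => simp [ih]

lemma phi2_flat_rev {A : Type*} (l : List A) :
    (l.map Sum.inl).reverse.flatMap (phi2 (A := A)) = (l.map Sum.inl).reverse := by
  rw [← List.map_reverse]
  exact phi2_flat_inl _

section Eval
variable {A S : Type*} [Semigroup S] (f : A → S)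

lemma evalW_append (u v : List A) : evalW f (u ++ v) = evalW f u * evalW f v := by
  simp [evalW]

lemma evalW_cons (a : A) (t : List A) :
    evalW f (a :: t) = (↑(f a) : WithOne S) * evalW f t := by
  simp [evalW]

@[simp] lemma evalW_nil : evalW f [] = 1 := rfl

lemma evalW_coe : ∀ w : List A, w ≠ [] → ∃ s : S, evalW f w = ↑s := by
  intro w
  induction w with
  | nil => simp
  | cons a t ih =>
    intro _
    cases t with
    | nil => exact ⟨f a, by simp [evalW]⟩
    | cons b t' =>
      obtain ⟨s, hs⟩ := ih (by simp)
      exact ⟨f a * s, by rw [evalW_cons, hs, WithOne.coe_mul]⟩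

end Eval

lemma marker_split {A : Type*} {b : Bool} :
    ∀ (u u' : List A) (β β' : List (A ⊕ Bool)),
      u.map Sum.inl ++ Sum.inr b :: β = u'.map Sum.inl ++ Sum.inr b :: β' →
      u = u' ∧ β = β' := by
  intro u
  induction u with
  | nil =>
    intro u' β β' h
    cases u' with
    | nil =>
      simp only [List.map_nil, List.nil_append, List.cons.injEq] at h
      exact ⟨rfl, h.2⟩
    | cons c u' => simp at h
  | cons c u ih =>
    intro u' β β' h
    cases u' with
    | nil => simp at h
    | cons c' u' =>
      simp only [List.map_cons, List.cons_append, List.cons.injEq] at h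
      obtain ⟨hc, h⟩ := h
      injection hc with hc
      obtain ⟨rfl, rfl⟩ := ih u' β β' h
      exact ⟨by rw [hc], rfl⟩

lemma lang_mem_singleton_iff {α : Type*} {a b : List α} :
    a ∈ ({b} : Language α) ↔ a = b := Iff.rfl

section TableEq
variable {A S : Type*} [Semigroup S] (f : A → S)

/-- The quotient language `(U a · #1 · a)⁻¹ T(R)`. -/
def DaL (f : A → S) (R : Language A) (U : A → List A) (a : A) : Language (A ⊕ Bool) :=
  {z | ((U a).map Sum.inl ++ [Sum.inr false, Sum.inl a]) ++ z ∈ tableS f R}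

/-- The piece of the extended table with `u = ε` and `v` starting with `a`. -/
def P1L (f : A → S) (R : Language A) (U : A → List A) (a : A) : Language (A ⊕ Bool) :=
  {x | ∃ z ∈ DaL f R U a, x = [Sum.inr false, Sum.inl a] ++ z}

/-- The homomorphic image of the quotient language under `phi2`. -/
def HaL (f : A → S) (R : Language A) (U : A → List A) (a : A) : Language (A ⊕ Bool) :=
  {y | ∃ z ∈ DaL f R U a, y = z.flatMap phi2}

/-- The piece of the extended table with `v = ε` and `u` starting with `a`. -/
def P2L (f : A → S) (R : Language A) (U : A → List A) (a : A) : Language (A ⊕ Bool) :=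
  {x | ∃ z' ∈ HaL f R U a, x = [Sum.inl a] ++ z'}

variable [Fintype A]

/-- The crucial language-equality: the table of `R ∪ {ε}` decomposes into the
table of `R` plus pieces obtained from it by quotients, homomorphisms and
concatenations, using chosen per-generator local left identities. -/
lemma table_eq (R : Language A) (hRne : ∀ w ∈ R, w ≠ [])
    (U : A → List A) (hUR : ∀ a, U a ∈ R)
    (hUkey : ∀ (a : A) (t : List A),
      evalW f (U a) * evalW f (a :: t) = evalW f (a :: t)) :
    tableS f (R + {[]}) =
      tableS f R +
        (({[Sum.inr false, Sum.inr true]} : Language (A ⊕ Bool)) +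
          (((Finset.univ : Finset A).toList.map (P1L f R U)).sum +
            ((Finset.univ : Finset A).toList.map (P2L f R U)).sum)) := by
  ext w
  simp only [Language.mem_add, CFGAux.mem_listSum, List.mem_map]
  constructor
  · rintro ⟨u, v, x, hu, hv, hx, heval, rfl⟩
    rw [Language.mem_add] at hu hv hx
    rcases hu with hu | hu
    · rcases hv with hv | hv
      · rcases hx with hx | hx
        · -- all in R : original table
          exact Or.inl ⟨u, v, x, hu, hv, hx, heval, rfl⟩
        · -- x = ε : impossible since u nonempty
          exfalso
          rw [lang_mem_singleton_iff] at hx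
          subst hx
          obtain ⟨s, hs⟩ := evalW_coe f (u ++ v) (by
            intro hc
            exact hRne u hu (List.append_eq_nil_iff.mp hc).1)
          rw [hs] at heval
          exact WithOne.coe_ne_one (heval.trans (evalW_nil f))
      · -- v = ε
        rw [lang_mem_singleton_iff] at hv
        subst hv
        rcases hx with hx | hx
        · -- u ∈ R, v = ε, x ∈ R : piece P2
          have hune : u ≠ [] := hRne u hu
          obtain ⟨a, u2, rfl⟩ : ∃ a u2, u = a :: u2 := by
            cases u with
            | nil => exact absurd rfl hune
            | cons a u2 => exact ⟨a, u2, rfl⟩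
          refine Or.inr (Or.inr (Or.inr ⟨P2L f R U a, ⟨a, by simp, rfl⟩, ?_⟩))
          refine ⟨(u2.map Sum.inl ++ [Sum.inr true] ++ (x.map Sum.inl).reverse).flatMap phi2,
            ⟨u2.map Sum.inl ++ [Sum.inr true] ++ (x.map Sum.inl).reverse, ?_, rfl⟩, ?_⟩
          · show _ ∈ tableS f R
            refine ⟨U a, a :: u2, x, hUR a, hu, hx, ?_, ?_⟩
            · rw [evalW_append, hUkey a u2]
              rw [List.append_nil] at heval
              exact heval
            · simp [List.append_assoc]
          · have hflat : (u2.map Sum.inl ++ [Sum.inr true] ++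
                (x.map Sum.inl).reverse).flatMap phi2 =
                u2.map Sum.inl ++ [Sum.inr false, Sum.inr true] ++
                  (x.map Sum.inl).reverse := by
              simp [List.flatMap_append, phi2_flat_inl, phi2_flat_rev, List.append_assoc]
            rw [hflat]
            simp [List.append_assoc]
        · -- u ∈ R, v = ε, x = ε : impossible
          exfalso
          rw [lang_mem_singleton_iff] at hx
          subst hx
          obtain ⟨s, hs⟩ := evalW_coe f (u ++ []) (by simpa using hRne u hu)
          rw [hs] at heval
          exact WithOne.coe_ne_one (heval.trans (evalW_nil f))
    · -- u = ε
      rw [lang_mem_singleton_iff] at hu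
      subst hu
      rcases hv with hv | hv
      · rcases hx with hx | hx
        · -- u = ε, v ∈ R, x ∈ R : piece P1
          have hvne : v ≠ [] := hRne v hv
          obtain ⟨a, v2, rfl⟩ : ∃ a v2, v = a :: v2 := by
            cases v with
            | nil => exact absurd rfl hvne
            | cons a v2 => exact ⟨a, v2, rfl⟩
          refine Or.inr (Or.inr (Or.inl ⟨P1L f R U a, ⟨a, by simp, rfl⟩, ?_⟩))
          refine ⟨v2.map Sum.inl ++ [Sum.inr true] ++ (x.map Sum.inl).reverse, ?_, ?_⟩
          · show _ ∈ tableS f R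
            refine ⟨U a, a :: v2, x, hUR a, hv, hx, ?_, ?_⟩
            · rw [evalW_append, hUkey a v2]
              rw [List.nil_append] at heval
              exact heval
            · simp [List.append_assoc]
          · simp [List.append_assoc]
        · -- u = ε, v ∈ R, x = ε : impossible
          exfalso
          rw [lang_mem_singleton_iff] at hx
          subst hx
          obtain ⟨s, hs⟩ := evalW_coe f v (hRne v hv)
          rw [List.nil_append, hs] at heval
          simp only [evalW_nil] at heval
          exact WithOne.coe_ne_one heval
      · -- u = ε, v = ε
        rw [lang_mem_singleton_iff] at hv
        subst hv
        rcases hx with hx | hx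
        · -- x ∈ R : impossible
          exfalso
          obtain ⟨s, hs⟩ := evalW_coe f x (hRne x hx)
          rw [hs] at heval
          simp only [List.nil_append, evalW_nil] at heval
          exact WithOne.coe_ne_one heval.symm
        · -- x = ε : the word #1#2
          rw [lang_mem_singleton_iff] at hx
          subst hx
          refine Or.inr (Or.inl ?_)
          apply lang_mem_singleton_iff.mpr
          simp
  · rintro (h | h | ⟨L, ⟨a, -, rfl⟩, h⟩ | ⟨L, ⟨a, -, rfl⟩, h⟩)
    · obtain ⟨u, v, x, hu, hv, hx, heval, rfl⟩ := h
      exact ⟨u, v, x, Or.inl hu, Or.inl hv, Or.inl hx, heval, rfl⟩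
    · rw [lang_mem_singleton_iff] at h
      subst h
      refine ⟨[], [], [], Or.inr rfl, Or.inr rfl, Or.inr rfl, rfl, by simp⟩
    · obtain ⟨z, hz, rfl⟩ := h
      obtain ⟨u', v', x', hu', hv', hx', heval', hshape⟩ := hz
      have hshape' : (U a).map Sum.inl ++ Sum.inr false ::
          (Sum.inl a :: z) = u'.map Sum.inl ++ Sum.inr false ::
          (v'.map Sum.inl ++ Sum.inr true :: (x'.map Sum.inl).reverse) := by
        simpa [List.append_assoc] using hshape
      obtain ⟨rfl, hz2⟩ := marker_split (U a) u' _ _ hshape'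
      cases v' with
      | nil => simp at hz2
      | cons c v2 =>
        rw [List.map_cons, List.cons_append, List.cons.injEq] at hz2
        obtain ⟨hca, rfl⟩ := hz2
        injection hca with hca
        subst hca
        have heval2 : evalW f (a :: v2) = evalW f x' := by
          rw [evalW_append, hUkey a v2] at heval'
          exact heval'
        refine ⟨[], a :: v2, x', Or.inr rfl, Or.inl hv', Or.inl hx', ?_, ?_⟩
        · rw [List.nil_append]
          exact heval2
        · simp [List.append_assoc]
    · obtain ⟨z', ⟨z, hz, rfl⟩, rfl⟩ := h
      obtain ⟨u', v', x', hu', hv', hx', heval', hshape⟩ := hz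
      have hshape' : (U a).map Sum.inl ++ Sum.inr false ::
          (Sum.inl a :: z) = u'.map Sum.inl ++ Sum.inr false ::
          (v'.map Sum.inl ++ Sum.inr true :: (x'.map Sum.inl).reverse) := by
        simpa [List.append_assoc] using hshape
      obtain ⟨rfl, hz2⟩ := marker_split (U a) u' _ _ hshape'
      cases v' with
      | nil => simp at hz2
      | cons c v2 =>
        rw [List.map_cons, List.cons_append, List.cons.injEq] at hz2
        obtain ⟨hca, rfl⟩ := hz2
        injection hca with hca
        subst hca
        have heval2 : evalW f (a :: v2) = evalW f x' := by
          rw [evalW_append, hUkey a v2] at heval'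
          exact heval'
        have hflat : (v2.map Sum.inl ++ Sum.inr true ::
            (x'.map Sum.inl).reverse).flatMap phi2 =
            v2.map Sum.inl ++ [Sum.inr false, Sum.inr true] ++
              (x'.map Sum.inl).reverse := by
          simp [List.flatMap_append, phi2_flat_inl, phi2_flat_rev, List.append_assoc]
        refine ⟨a :: v2, [], x', Or.inl hv', Or.inr rfl, Or.inl hx', ?_, ?_⟩
        · rw [List.append_nil]
          exact heval2
        · rw [hflat]
          simp [List.append_assoc]

end TableEq

end OneExtAux

namespace OneExtAux

section Dfa
variable {A σ : Type*} (M : DFA A σ)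

/-- A DFA accepting `L(M) ∪ {ε}`. -/
def addEpsDFA : DFA A (σ × Bool) where
  step := fun p a => (M.step p.1 a, false)
  start := (M.start, true)
  accept := {p | p.1 ∈ M.accept ∨ p.2 = true}

lemma addEpsDFA_evalFrom :
    ∀ (w : List A), w ≠ [] → ∀ (s : σ) (b : Bool),
      (addEpsDFA M).evalFrom (s, b) w = (M.evalFrom s w, false) := by
  intro w
  induction w with
  | nil => intro h; exact absurd rfl h
  | cons a t ih =>
    intro _ s b
    cases t with
    | nil => rfl
    | cons c t' =>
      have h1 : (addEpsDFA M).evalFrom (s, b) (a :: c :: t') =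
          (addEpsDFA M).evalFrom (M.step s a, false) (c :: t') := rfl
      rw [h1, ih (by simp)]
      rfl

lemma addEpsDFA_accepts : (addEpsDFA M).accepts = M.accepts + {[]} := by
  ext w
  rw [DFA.mem_accepts, Language.mem_add]
  cases w with
  | nil =>
    constructor
    · intro _
      exact Or.inr rfl
    · intro _
      exact Or.inr rfl
  | cons a t =>
    have h1 : (addEpsDFA M).eval (a :: t) = (M.eval (a :: t), false) :=
      addEpsDFA_evalFrom M _ (by simp) _ _
    constructor
    · intro h
      rw [show (addEpsDFA M).eval (a :: t) = (M.eval (a :: t), false) from h1] at h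
      rcases h with h | h
      · exact Or.inl (DFA.mem_accepts M |>.mpr h)
      · exact absurd h (by simp)
    · intro h
      rcases h with h | h
      · rw [DFA.mem_accepts] at h
        show _ ∈ (addEpsDFA M).accept
        rw [h1]
        exact Or.inl h
      · exact absurd (lang_mem_singleton_iff.mp h) (by simp)

end Dfa

end OneExtAux


/-- Every von Neumann regular semigroup (`∀ s, ∃ x, s x s = s`) that is
word-hyperbolic with respect to a regular combing `R ⊆ A⁺` is `1`-extendable:
`S^1` is word-hyperbolic with respect to `R ∪ {ε}`. -/
theorem vonNeumann_regular_one_extendable {A S : Type*} [Fintype A] [Semigroup S]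
    (f : A → S)
    (hgen : ∀ s : S, ∃ w : List A, w ≠ [] ∧ evalW f w = ↑s)
    (R : Language A) (hRne : ∀ w ∈ R, w ≠ [])
    (hreg : R.IsRegular)
    (hcomb : ∀ s : S, ∃ w ∈ R, evalW f w = ↑s)
    (htab : (tableS f R).IsContextFree)
    (hvn : ∀ s : S, ∃ x : S, s * x * s = s) :
    (R + {[]} : Language A).IsRegular ∧
    (∀ x : WithOne S, ∃ w ∈ (R + {[]} : Language A), evalW f w = x) ∧
    (tableS f (R + {[]})).IsContextFree := by
  classical
  refine ⟨?_, ?_, ?_⟩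
  · -- regularity of R ∪ {ε}
    obtain ⟨σ, hσfin, M, hM⟩ := hreg
    letI := hσfin
    exact ⟨σ × Bool, inferInstance, OneExtAux.addEpsDFA M,
      by rw [OneExtAux.addEpsDFA_accepts, hM]⟩
  · -- the combing covers S¹
    intro x
    by_cases hx : x = 1
    · subst hx
      exact ⟨[], (Language.mem_add _ _ _).mpr (Or.inr rfl), rfl⟩
    · obtain ⟨s, rfl⟩ := WithOne.ne_one_iff_exists.mp hx
      obtain ⟨w, hw, hval⟩ := hcomb s
      exact ⟨w, (Language.mem_add _ _ _).mpr (Or.inl hw), hval⟩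
  · -- context-freeness of the extended table
    have hUex : ∀ a : A, ∃ u, u ∈ R ∧
        ∀ t : List A, evalW f u * evalW f (a :: t) = evalW f (a :: t) := by
      intro a
      obtain ⟨x, hx⟩ := hvn (f a)
      obtain ⟨u, huR, huval⟩ := hcomb (f a * x)
      refine ⟨u, huR, fun t => ?_⟩
      rw [OneExtAux.evalW_cons, huval, ← mul_assoc, ← WithOne.coe_mul, hx]
    choose U hUR hUkey using hUex
    rw [OneExtAux.table_eq f R hRne U hUR hUkey]
    refine CFGAux.cf_add htab (CFGAux.cf_add (CFGAux.cf_singletonWord _)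
      (CFGAux.cf_add (CFGAux.cf_listSum _ ?_) (CFGAux.cf_listSum _ ?_)))
    · intro L hL
      rw [List.mem_map] at hL
      obtain ⟨a, -, rfl⟩ := hL
      exact CFGAux.cf_prepend _ (CFGAux.cf_deriv _ htab)
    · intro L hL
      rw [List.mem_map] at hL
      obtain ⟨a, -, rfl⟩ := hL
      exact CFGAux.cf_prepend _ (CFGAux.cf_hom OneExtAux.phi2 (CFGAux.cf_deriv _ htab))
end
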